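/- arXiv:1402.1302 — 6 statements merged into one kernel-verified Lean document; each statement's English description precedes it below -/
import Mathlib

section
/- Let n ≥ 1 be an integer and L > 0 a real number. For all z, w ∈ ℂⁿ with ‖z‖ < 1 and ‖w‖ < 1, the family indexed by multi-indices α ∈ ℕⁿ with terms (Γ(L+|α|)/(α!·Γ(L))) · ∏_{j=1}^n z_j^{α_j} · (conj w_j)^{α_j} is summable, and its sum equals (1 − ∑_{j=1}^n z_j · conj w_j)^{−L} (complex power with the principal branch; note Re(1 − ∑ z_j conj w_j) > 0). -/
open scoped BigOperators
open Filter Topology FormalMultilinearSeries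

namespace CovKernelAux


/-- The binomial-series coefficient `Γ(L+k)/(k! Γ(L))`. -/
noncomputable def cr (L : ℝ) (k : ℕ) : ℝ :=
  Real.Gamma (L + k) / (k.factorial * Real.Gamma L)

variable {L : ℝ}

lemma cr_pos (hL : 0 < L) (k : ℕ) : 0 < cr L k := by
  have h1 : 0 < Real.Gamma (L + k) := Real.Gamma_pos_of_pos (by positivity)
  have h2 : 0 < Real.Gamma L := Real.Gamma_pos_of_pos hL
  have h3 : (0:ℝ) < k.factorial := by exact_mod_cast k.factorial_pos
  exact div_pos h1 (by positivity)

lemma cr_zero (hL : 0 < L) : cr L 0 = 1 := by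
  have h2 : Real.Gamma L ≠ 0 := (Real.Gamma_pos_of_pos hL).ne'
  simp [cr, h2]

lemma cr_succ (hL : 0 < L) (k : ℕ) :
    ((k : ℝ) + 1) * cr L (k + 1) = (L + k) * cr L k := by
  have hΓ : Real.Gamma (L + (k + 1 : ℕ)) = (L + k) * Real.Gamma (L + k) := by
    have h : L + ((k + 1 : ℕ) : ℝ) = (L + k) + 1 := by push_cast; ring
    rw [h, Real.Gamma_add_one (by positivity)]
  have h2 : Real.Gamma L ≠ 0 := (Real.Gamma_pos_of_pos hL).ne'
  have hf : (((k+1).factorial : ℕ) : ℝ) = ((k:ℝ)+1) * k.factorial := by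
    push_cast [Nat.factorial_succ]; ring
  have hk : (k.factorial : ℝ) ≠ 0 := by exact_mod_cast k.factorial_ne_zero
  unfold cr
  rw [hΓ, hf]
  field_simp

lemma cr_one (hL : 0 < L) : cr L 1 = L := by
  have := cr_succ hL 0
  rw [cr_zero hL] at this
  simpa using this


variable {L : ℝ}





lemma memball {v : ℂ} (hv : ‖v‖ < 1) : v ∈ Metric.eball (0:ℂ) 1 := by
  rw [Metric.mem_eball, edist_zero_right, enorm_eq_nnnorm]
  exact_mod_cast hv

theorem hasSum_binom (hL : 0 < L) {u : ℂ} (hu : ‖u‖ < 1) :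
    HasSum (fun k : ℕ => ((cr L k : ℝ) : ℂ) * u ^ k) ((1 - u) ^ (-(L : ℂ))) := by
  set c : ℕ → ℂ := fun k => ((cr L k : ℝ) : ℂ) with hc
  set p := ofScalars ℂ c with hp
  -- radius at least 1
  have hrad : 1 ≤ p.radius := by
    have htend : Tendsto (fun k : ℕ => ‖c (k+1)‖ / ‖c k‖) atTop (𝓝 ((1 : NNReal) : ℝ)) := by
      have heq : ∀ k : ℕ, ‖c (k+1)‖ / ‖c k‖ = 1 + (L - 1) / ((k : ℝ) + 1) := by
        intro k
        have hpos := cr_pos hL k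
        have hpos' := cr_pos hL (k+1)
        have hrec := cr_succ hL k
        have h1 : ‖c (k+1)‖ = cr L (k+1) := by
          simp [hc, Complex.norm_real, abs_of_pos hpos']
        have h2 : ‖c k‖ = cr L k := by
          simp [hc, Complex.norm_real, abs_of_pos hpos]
        rw [h1, h2]
        have hk1 : ((k:ℝ)+1) ≠ 0 := by positivity
        field_simp
        linear_combination hrec
      simp only [heq, NNReal.coe_one]
      have h0 : Tendsto (fun k : ℕ => (L - 1) / ((k : ℝ) + 1)) atTop (𝓝 0) := by
        have h2 := (tendsto_const_div_atTop_nhds_zero_nat (L - 1)).comp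
          (tendsto_add_atTop_nat 1)
        simp only [Function.comp_def] at h2
        push_cast at h2
        exact h2
      simpa using (tendsto_const_nhds (x := (1:ℝ))).add h0
    have := inv_le_ofScalars_radius_of_tendsto ℂ c one_ne_zero htend
    simpa using this
  set S := p.sum with hS'
  have hS : HasFPowerSeriesOnBall S p 0 1 :=
    (p.hasFPowerSeriesOnBall (lt_of_lt_of_le one_pos hrad)).mono one_pos hrad
  -- basic sum formula
  have hsum : ∀ v : ℂ, ‖v‖ < 1 → HasSum (fun k => c k * v ^ k) (S v) := by
    intro v hv
    have h := hS.hasSum (memball hv)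
    rw [zero_add] at h
    convert h using 2 with k
    · rfl
    rw [hp, ofScalars_apply_eq, smul_eq_mul]
  have hS0 : S 0 = 1 := by
    have h0 := hsum 0 (by norm_num)
    have h1 : HasSum (fun k => c k * (0:ℂ) ^ k) (c 0 * (0:ℂ)^0) :=
      hasSum_single 0 (fun b hb => by simp [zero_pow hb])
    have := h0.unique h1
    rw [this]
    simp [hc, cr_zero hL]
  -- derivative series
  have hd : ∀ v : ℂ, ‖v‖ < 1 →
      HasSum (fun k : ℕ => (((k:ℂ)+1) * c (k+1)) * v ^ (k+1)) (v * deriv S v) := by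
    intro v hv
    have h1 := hS.fderiv.hasSum (memball hv)
    have h2 := h1.mapL (ContinuousLinearMap.apply ℂ ℂ v)
    have h3 : (fderiv ℂ S (0 + v)) v = v * deriv S v := by
      rw [zero_add]
      have : v = v • (1:ℂ) := by simp
      conv_lhs => rw [this]
      rw [map_smul]
      simp [fderiv_apply_one_eq_deriv, smul_eq_mul]
    simp only [ContinuousLinearMap.apply_apply] at h2
    rw [h3] at h2
    convert h2 using 2 with k
    · rfl
    rw [derivSeries_apply_diag]
    rw [hp, ofScalars_apply_eq]
    push_cast
    simp [smul_eq_mul]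
    ring
  -- the ODE
  have hODE : ∀ v ∈ Metric.ball (0:ℂ) 1, (1 - v) * deriv S v = (L:ℂ) * S v := by
    intro v hv
    have hv' : ‖v‖ < 1 := mem_ball_zero_iff.mp hv
    have hA := hd v hv'
    have hB : HasSum (fun k : ℕ => ((k:ℂ) * c k) * v ^ k) (v * deriv S v) := by
      have hA' : HasSum (fun k : ℕ => (((k+1 : ℕ):ℂ) * c (k+1)) * v ^ (k+1))
          (v * deriv S v) := by
        convert hA using 2 with k
        push_cast
        ring
      have h := (hasSum_nat_add_iff (f := fun k : ℕ => ((k:ℂ) * c k) * v ^ k) 1).mp hA'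
      simpa using h
    have hC := (hsum v hv').mul_left (L:ℂ)
    have hD := hC.add hB
    have hterm : ∀ k : ℕ, (((k:ℂ)+1) * c (k+1)) * v ^ k
        = (L:ℂ) * (c k * v ^ k) + ((k:ℂ) * c k) * v ^ k := by
      intro k
      have h := congrArg (fun r : ℝ => (r : ℂ)) (cr_succ hL k)
      push_cast at h
      have h2 : ((k:ℂ)+1) * c (k+1) = ((L:ℂ) + k) * c k := by
        rw [hc]; push_cast; linear_combination h
      rw [h2]; ring
    have hD' : HasSum (fun k : ℕ => (((k:ℂ)+1) * c (k+1)) * v ^ k)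
        ((L:ℂ) * S v + v * deriv S v) := by
      convert hD using 1
      · rfl
      exact funext hterm
    by_cases hv0 : v = 0
    · subst hv0
      have hder : deriv S 0 = c 1 := by
        have := hS.hasFPowerSeriesAt.deriv
        rw [this, hp, ofScalars_apply_eq]
        simp
      rw [hder, hS0]
      simp [hc, cr_one hL]
    · have hE := hA.mul_right v⁻¹
      have hE' : HasSum (fun k : ℕ => (((k:ℂ)+1) * c (k+1)) * v ^ k) (deriv S v) := by
        convert hE using 1
        · rfl
        · funext k
          rw [pow_succ]
          field_simp
          try ring
        · field_simp
      have huniq := hE'.unique hD'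
      linear_combination huniq
  -- constancy
  have key : ∀ v : ℂ, ‖v‖ < 1 → (1 - v) ^ (L:ℂ) * S v = 1 := by
    set g : ℂ → ℂ := fun v => (1 - v) ^ (L:ℂ) * S v with hg
    have hg0 : ∀ v ∈ Metric.ball (0:ℂ) 1, HasDerivAt g 0 v := by
      intro v hv
      have hv' : ‖v‖ < 1 := mem_ball_zero_iff.mp hv
      have hre : 0 < (1 - v).re := by
        have h1 : |v.re| ≤ ‖v‖ := Complex.abs_re_le_norm v
        have h2 : v.re ≤ |v.re| := le_abs_self _
        simp only [Complex.sub_re, Complex.one_re]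
        linarith
      have hslit : (1:ℂ) - v ∈ Complex.slitPlane := Or.inl hre
      have hne : (1:ℂ) - v ≠ 0 := Complex.slitPlane_ne_zero hslit
      have h1 : HasDerivAt (fun v : ℂ => 1 - v) (-1) v := (hasDerivAt_id v).const_sub 1
      have h2 := h1.cpow_const (c := (L:ℂ)) hslit
      have h3 : HasDerivAt S (deriv S v) v :=
        ((hS.analyticAt_of_mem (memball hv')).differentiableAt).hasDerivAt
      have h4 := h2.mul h3
      convert h4 using 1
      · rfl
      · rfl
      · rfl
      have hpow : ((1:ℂ) - v) ^ (L:ℂ) = ((1:ℂ) - v) ^ ((L:ℂ)-1) * ((1:ℂ) - v) := by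
        conv_lhs => rw [show (L:ℂ) = (L:ℂ)-1+1 by ring]
        rw [Complex.cpow_add _ _ hne, Complex.cpow_one]
      rw [hpow]
      have hode := hODE v hv
      linear_combination (-(((1:ℂ) - v) ^ ((L:ℂ)-1))) * hode
    have hdiff : DifferentiableOn ℂ g (Metric.ball (0:ℂ) 1) := fun v hv =>
      (hg0 v hv).differentiableAt.differentiableWithinAt
    intro v hv'
    have hv : v ∈ Metric.ball (0:ℂ) 1 := mem_ball_zero_iff.mpr hv'
    have h0mem : (0:ℂ) ∈ Metric.ball (0:ℂ) 1 := by simp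
    have hconst := (convex_ball (0:ℂ) 1).is_const_of_fderivWithin_eq_zero hdiff
      (fun y hy => by
        rw [fderivWithin_of_isOpen Metric.isOpen_ball hy, (hg0 y hy).hasFDerivAt.fderiv]
        ext
        simp) hv h0mem
    have hg0val : g 0 = 1 := by
      simp [hg, hS0]
    rw [show (1 - v) ^ (L:ℂ) * S v = g v from rfl, hconst, hg0val]
  -- conclude
  have hval : S u = (1 - u) ^ (-(L:ℂ)) := by
    have hk := key u hu
    have h2 := eq_inv_of_mul_eq_one_right hk
    rw [h2, Complex.cpow_neg]
  rw [← hval]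
  exact hsum u hu






/-- the fiberwise multinomial identity -/
lemma fiber_sum (hL : 0 < L) {n : ℕ} (k : ℕ) (y : Fin n → ℂ) :
    ∑ α ∈ Finset.piAntidiag (Finset.univ : Finset (Fin n)) k,
      (((Real.Gamma (L + k) / ((∏ j, Nat.factorial (α j) : ℕ) * Real.Gamma L) : ℝ) : ℂ) *
        ∏ j, y j ^ α j)
      = ((cr L k : ℝ) : ℂ) * (∑ j, y j) ^ k := by
  classical
  rw [Finset.sum_pow_eq_sum_piAntidiag, Finset.mul_sum]
  refine Finset.sum_congr rfl fun α hα => ?_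
  rw [Finset.mem_piAntidiag] at hα
  have hsum : ∑ j, α j = k := hα.1
  have hmul : ((∏ j, Nat.factorial (α j) : ℕ) : ℝ) * (Nat.multinomial Finset.univ α : ℝ)
      = (Nat.factorial k : ℝ) := by
    rw [← hsum]
    exact_mod_cast congrArg (Nat.cast (R := ℝ)) (Nat.multinomial_spec Finset.univ α)
  have hΓL : Real.Gamma L ≠ 0 := (Real.Gamma_pos_of_pos hL).ne'
  have hk : ((Nat.factorial k : ℕ) : ℝ) ≠ 0 := by exact_mod_cast k.factorial_ne_zero
  have hα' : ((∏ j, Nat.factorial (α j) : ℕ) : ℝ) ≠ 0 := by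
    have : 0 < ∏ j, Nat.factorial (α j) := Finset.prod_pos fun j _ => (α j).factorial_pos
    exact_mod_cast this.ne'
  have hcoef : (Real.Gamma (L + k) / ((∏ j, Nat.factorial (α j) : ℕ) * Real.Gamma L) : ℝ)
      = cr L k * (Nat.multinomial Finset.univ α : ℝ) := by
    rw [cr]
    field_simp
    push_cast at hmul ⊢
    linear_combination -hmul
  calc (((Real.Gamma (L + k) / ((∏ j, Nat.factorial (α j) : ℕ) * Real.Gamma L) : ℝ) : ℂ) *
        ∏ j, y j ^ α j)
      = ((cr L k : ℝ) : ℂ) * ((Nat.multinomial Finset.univ α : ℝ) : ℂ) * ∏ j, y j ^ α j := by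
        rw [hcoef]; push_cast; ring
    _ = ((cr L k : ℝ) : ℂ) * ((Nat.multinomial Finset.univ α : ℕ) * ∏ j, y j ^ α j) := by
        push_cast; ring


end CovKernelAux

open CovKernelAux

/-- The covariance kernel of the hyperbolic GAF in the unit ball of ℂⁿ:
for `‖z‖ < 1`, `‖w‖ < 1`, the family
`(Γ(L+|α|)/(α! Γ(L))) zᵅ (conj w)ᵅ` indexed by multi-indices `α ∈ ℕⁿ`
is summable with sum `(1 - z ⬝ conj w)^{-L}` (principal branch). -/
theorem covariance_kernel_hasSum
    (n : ℕ) (hn : 1 ≤ n) (L : ℝ) (hL : 0 < L)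
    (z w : EuclideanSpace ℂ (Fin n)) (hz : ‖z‖ < 1) (hw : ‖w‖ < 1) :
    HasSum
      (fun α : Fin n → ℕ =>
        ((Real.Gamma (L + (∑ j, α j : ℕ)) /
            ((∏ j, Nat.factorial (α j) : ℕ) * Real.Gamma L) : ℝ) : ℂ) *
          ∏ j, (z j ^ α j * (starRingEnd ℂ) (w j) ^ α j))
      ((1 - ∑ j, z j * (starRingEnd ℂ) (w j)) ^ (-(L : ℂ))) := by
  classical
  set x : Fin n → ℂ := fun j => z j * (starRingEnd ℂ) (w j) with hx
  set T : (Fin n → ℕ) → ℂ := fun α =>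
    ((Real.Gamma (L + (∑ j, α j : ℕ)) /
        ((∏ j, Nat.factorial (α j) : ℕ) * Real.Gamma L) : ℝ) : ℂ) *
      ∏ j, (z j ^ α j * (starRingEnd ℂ) (w j) ^ α j) with hT
  have hTx : ∀ α : Fin n → ℕ, T α =
      ((Real.Gamma (L + (∑ j, α j : ℕ)) /
        ((∏ j, Nat.factorial (α j) : ℕ) * Real.Gamma L) : ℝ) : ℂ) * ∏ j, x j ^ α j := by
    intro α
    rw [hT]
    simp only [hx, mul_pow]
  set u : ℂ := ∑ j, x j with hu
  set ρ : ℝ := ∑ j, ‖x j‖ with hρ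
  have hρ0 : 0 ≤ ρ := Finset.sum_nonneg fun _ _ => norm_nonneg _
  have hρ1 : ρ < 1 := by
    have h1 : ρ ≤ ‖z‖ * ‖w‖ := by
      have hcs := Real.sum_mul_le_sqrt_mul_sqrt Finset.univ
        (fun j => ‖z j‖) (fun j => ‖w j‖)
      have h2 : ρ = ∑ j, ‖z j‖ * ‖w j‖ := by
        rw [hρ]
        refine Finset.sum_congr rfl fun j _ => ?_
        rw [hx]
        simp [norm_mul]
      rw [h2, EuclideanSpace.norm_eq, EuclideanSpace.norm_eq]
      exact hcs
    nlinarith [norm_nonneg z, norm_nonneg w]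
  have hu1 : ‖u‖ < 1 := lt_of_le_of_lt (norm_sum_le _ _) hρ1
  -- fintype instances on fibers
  haveI inst : ∀ k : ℕ, Fintype {α : Fin n → ℕ // ∑ j, α j = k} := fun k =>
    Fintype.subtype (Finset.piAntidiag (Finset.univ : Finset (Fin n)) k)
      (by intro α; simp [Finset.mem_piAntidiag])
  have hsubty : ∀ (k : ℕ) (f : (Fin n → ℕ) → ℂ),
      ∑ β : {α : Fin n → ℕ // ∑ j, α j = k}, f β.1
        = ∑ α ∈ Finset.piAntidiag (Finset.univ : Finset (Fin n)) k, f α := by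
    intro k f
    exact (Finset.sum_subtype _ (by intro α; simp [Finset.mem_piAntidiag]) f).symm
  have hsubtyR : ∀ (k : ℕ) (f : (Fin n → ℕ) → ℝ),
      ∑ β : {α : Fin n → ℕ // ∑ j, α j = k}, f β.1
        = ∑ α ∈ Finset.piAntidiag (Finset.univ : Finset (Fin n)) k, f α := by
    intro k f
    exact (Finset.sum_subtype _ (by intro α; simp [Finset.mem_piAntidiag]) f).symm
  -- fiber sums
  have hfib : ∀ k : ℕ,
      HasSum (fun β : {α : Fin n → ℕ // ∑ j, α j = k} => T β.1)
        (((cr L k : ℝ) : ℂ) * u ^ k) := by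
    intro k
    have h1 := hasSum_fintype (fun β : {α : Fin n → ℕ // ∑ j, α j = k} => T β.1)
    have h2 : ∑ β : {α : Fin n → ℕ // ∑ j, α j = k}, T β.1
        = ((cr L k : ℝ) : ℂ) * u ^ k := by
      rw [hsubty k T, hu, ← fiber_sum hL k x]
      refine Finset.sum_congr rfl fun α hα => ?_
      rw [Finset.mem_piAntidiag] at hα
      rw [hTx α, hα.1]
    rwa [h2] at h1
  -- summability
  have hsummable : Summable (fun σ : Σ k : ℕ, {α : Fin n → ℕ // ∑ j, α j = k} => T σ.2.1) := by
    apply Summable.of_norm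
    rw [summable_sigma_of_nonneg (fun _ => norm_nonneg _)]
    constructor
    · intro k
      exact Summable.of_finite
    · -- rewrite the inner tsums
      have hnorm : ∀ α : Fin n → ℕ, ‖T α‖ =
          (Real.Gamma (L + (∑ j, α j : ℕ)) /
            ((∏ j, Nat.factorial (α j) : ℕ) * Real.Gamma L) : ℝ) * ∏ j, ‖x j‖ ^ α j := by
        intro α
        rw [hTx α, norm_mul, Complex.norm_real]
        have hpos : 0 ≤ (Real.Gamma (L + (∑ j, α j : ℕ)) /
            ((∏ j, Nat.factorial (α j) : ℕ) * Real.Gamma L) : ℝ) := by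
          have h1 : 0 < Real.Gamma (L + (∑ j, α j : ℕ)) :=
            Real.Gamma_pos_of_pos (by positivity)
          have h2 : 0 < Real.Gamma L := Real.Gamma_pos_of_pos hL
          have h3 : (0:ℝ) < ((∏ j, Nat.factorial (α j) : ℕ) : ℝ) := by
            exact_mod_cast Finset.prod_pos fun j _ => (α j).factorial_pos
          positivity
        rw [Real.norm_eq_abs, abs_of_nonneg hpos, norm_prod]
        simp [norm_pow]
      have hval : ∀ k : ℕ, (∑' β : {α : Fin n → ℕ // ∑ j, α j = k}, ‖T β.1‖)
          = cr L k * ρ ^ k := by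
        intro k
        rw [tsum_fintype, hsubtyR k (fun α => ‖T α‖)]
        have := fiber_sum hL k (fun j => (‖x j‖ : ℂ))
        have hc : ∑ α ∈ Finset.piAntidiag (Finset.univ : Finset (Fin n)) k, ‖T α‖
            = cr L k * ρ ^ k := by
          have hreal : ((∑ α ∈ Finset.piAntidiag (Finset.univ : Finset (Fin n)) k,
              ‖T α‖ : ℝ) : ℂ) = ((cr L k * ρ ^ k : ℝ) : ℂ) := by
            rw [hρ]
            push_cast
            rw [← this]
            push_cast
            refine Finset.sum_congr rfl fun α hα => ?_
            rw [Finset.mem_piAntidiag] at hα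
            rw [hnorm α, hα.1]
            push_cast
            ring
          exact_mod_cast hreal
        exact hc
      simp only [hval]
      have hsb := (hasSum_binom hL (u := (ρ : ℂ))
        (by rw [Complex.norm_real, Real.norm_eq_abs, abs_of_nonneg hρ0]; exact hρ1)).summable
      have : Summable (fun k : ℕ => ((cr L k * ρ ^ k : ℝ) : ℂ)) := by
        convert hsb using 2 with k
        push_cast
        ring
      exact Complex.summable_ofReal.mp this
  -- assemble
  have hmain : HasSum (fun σ : Σ k : ℕ, {α : Fin n → ℕ // ∑ j, α j = k} => T σ.2.1)
      ((1 - u) ^ (-(L : ℂ))) :=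
    HasSum.sigma_of_hasSum (hasSum_binom hL hu1) hfib hsummable
  have he := (Equiv.sigmaFiberEquiv (fun α : Fin n → ℕ => ∑ j, α j)).hasSum_iff
    (f := T) (a := (1 - u) ^ (-(L : ℂ)))
  rw [← he]
  exact hmain
end

section
/- Let n ≥ 2 be an integer, L > 0 real and 0 < r < 1. Then r^{4n} (1−r²)^{2L−2} · ∫_𝔻 (1−|w|²)^{n−2} |1−w|² / ((|1−r²w|^{2L} − (1−r²)^{2L}) · |1−r²w|²) dA(w) = 2 (1−r²)^{n−2} · K(L,r), where the left-hand integral is over the open unit disk 𝔻 ⊂ ℂ with respect to planar Lebesgue measure dA. -/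
open scoped Real

open MeasureTheory Set Real

theorem lintegral_comp_polarCoord_symm_aux (f : ℝ × ℝ → ENNReal) :
    (∫⁻ p in polarCoord.target, ENNReal.ofReal p.1 * f (polarCoord.symm p)) = ∫⁻ p, f p := by
  set B : ℝ × ℝ → ℝ × ℝ →L[ℝ] ℝ × ℝ := fun p =>
    LinearMap.toContinuousLinearMap (Matrix.toLin (Module.Basis.finTwoProd ℝ) (Module.Basis.finTwoProd ℝ)
      !![Real.cos p.2, -p.1 * Real.sin p.2; Real.sin p.2, p.1 * Real.cos p.2])
  have A : ∀ p ∈ polarCoord.target, HasFDerivWithinAt polarCoord.symm (B p) polarCoord.target p :=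
    fun p _ => (hasFDerivAt_polarCoord_symm p).hasFDerivWithinAt
  have B_det : ∀ p, (B p).det = p.1 := by
    intro p
    conv_rhs => rw [← one_mul p.1, ← Real.cos_sq_add_sin_sq p.2]
    simp only [B, neg_mul, LinearMap.det_toContinuousLinearMap, LinearMap.det_toLin,
      Matrix.det_fin_two_of, sub_neg_eq_add]
    ring
  symm
  calc
    ∫⁻ p, f p = ∫⁻ p in polarCoord.source, f p := by
      rw [← setLIntegral_univ]
      exact setLIntegral_congr polarCoord_source_ae_eq_univ.symm
    _ = ∫⁻ p in polarCoord.symm '' polarCoord.target, f p := by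
      rw [polarCoord.symm_image_target_eq_source]
    _ = ∫⁻ p in polarCoord.target, ENNReal.ofReal |(B p).det| * f (polarCoord.symm p) := by
      exact lintegral_image_eq_lintegral_abs_det_fderiv_mul volume
        polarCoord.open_target.measurableSet A polarCoord.symm.injOn f
    _ = ∫⁻ p in polarCoord.target, ENNReal.ofReal p.1 * f (polarCoord.symm p) := by
      refine setLIntegral_congr_fun polarCoord.open_target.measurableSet
        (fun x hx => ?_)
      rw [B_det, abs_of_pos hx.1]

theorem Complex.lintegral_comp_polarCoord_symm_aux2 (f : ℂ → ENNReal) :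
    (∫⁻ p in polarCoord.target, ENNReal.ofReal p.1 * f (Complex.polarCoord.symm p)) =
      ∫⁻ p, f p := by
  rw [← (Complex.volume_preserving_equiv_real_prod.symm).lintegral_comp_emb
    Complex.measurableEquivRealProd.symm.measurableEmbedding f,
    ← lintegral_comp_polarCoord_symm_aux]
  rfl

set_option maxHeartbeats 1000000 in
lemma lintegral_disk_eq (r : ℝ) (hr0 : 0 < r) (g : ℂ → ENNReal) :
    ∫⁻ w in {w : ℂ | ‖w‖ < 1}, g w
      = ∫⁻ u in {u : ℂ | ‖1 - u‖ < r ^ 2},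
          ENNReal.ofReal ((r ^ 4)⁻¹) * g ((1 - u) / (r : ℂ) ^ 2) := by
  have hr2 : ((r : ℂ) ^ 2) ≠ 0 := pow_ne_zero 2 (Complex.ofReal_ne_zero.mpr hr0.ne')
  set φ : ℂ → ℂ := fun u => (1 - u) / (r : ℂ) ^ 2 with hφ
  set s : Set ℂ := {u : ℂ | ‖1 - u‖ < r ^ 2} with hsdef
  have hs : MeasurableSet s := by
    have : IsOpen s := by
      have : s = (fun u : ℂ => ‖1 - u‖) ⁻¹' Iio (r ^ 2) := rfl
      rw [this]
      exact IsOpen.preimage (by continuity) isOpen_Iio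
    exact this.measurableSet
  set L : ℂ →L[ℝ] ℂ := (-(r ^ 2)⁻¹ : ℝ) • ContinuousLinearMap.id ℝ ℂ with hL
  have hderiv : ∀ u ∈ s, HasFDerivWithinAt φ L s u := by
    intro u _
    have h1 : HasFDerivAt (fun u : ℂ => ((r ^ 2)⁻¹ : ℝ) • u)
        (((r ^ 2)⁻¹ : ℝ) • ContinuousLinearMap.id ℝ ℂ) u :=
      (hasFDerivAt_id u).const_smul ((r ^ 2)⁻¹ : ℝ)
    have h2 : HasFDerivAt (fun u : ℂ => ((r ^ 2)⁻¹ : ℝ) • (1 : ℂ) - ((r ^ 2)⁻¹ : ℝ) • u)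
        (-(((r ^ 2)⁻¹ : ℝ) • ContinuousLinearMap.id ℝ ℂ)) u := h1.const_sub _
    have heq : (fun u : ℂ => ((r ^ 2)⁻¹ : ℝ) • (1 : ℂ) - ((r ^ 2)⁻¹ : ℝ) • u) = φ := by
      funext u
      rw [hφ]
      simp only [Complex.real_smul]
      push_cast
      field_simp
    rw [heq] at h2
    have hLeq : L = -(((r ^ 2)⁻¹ : ℝ) • ContinuousLinearMap.id ℝ ℂ) := by
      rw [hL]; exact (neg_smul ((r ^ 2)⁻¹ : ℝ) (ContinuousLinearMap.id ℝ ℂ))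
    rw [hLeq]
    exact h2.hasFDerivWithinAt
  have hinj : InjOn φ s := by
    intro u _ v _ h
    have h' : (1 : ℂ) - u = 1 - v := by
      have := congrArg (fun z : ℂ => z * (r : ℂ) ^ 2) h
      simpa [hφ, div_mul_cancel₀, hr2] using this
    linear_combination -h'
  have himg : {w : ℂ | ‖w‖ < 1} = φ '' s := by
    ext w
    have habs : ‖(r : ℂ) ^ 2‖ = r ^ 2 := by
      rw [norm_pow, Complex.norm_real, Real.norm_eq_abs, abs_of_pos hr0]
    constructor
    · intro hw
      refine ⟨1 - (r : ℂ) ^ 2 * w, ?_, ?_⟩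
      · simp only [hsdef, mem_setOf_eq, sub_sub_cancel]
        rw [norm_mul, habs]
        calc r ^ 2 * ‖w‖ < r ^ 2 * 1 :=
              mul_lt_mul_of_pos_left hw (by positivity)
          _ = r ^ 2 := mul_one _
      · simp only [hφ, sub_sub_cancel]
        linear_combination w * mul_inv_cancel₀ hr2
    · rintro ⟨u, hu, rfl⟩
      simp only [hφ, mem_setOf_eq, norm_div, habs]
      rw [div_lt_one (by positivity)]
      exact hu
  have hdet : ENNReal.ofReal |L.det| = ENNReal.ofReal ((r ^ 4)⁻¹) := by
    have hd : L.det = (-(r ^ 2)⁻¹ : ℝ) ^ 2 := by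
      rw [hL, ContinuousLinearMap.det]
      rw [ContinuousLinearMap.coe_smul, ContinuousLinearMap.coe_id]
      rw [LinearMap.det_smul, Complex.finrank_real_complex, LinearMap.det_id, mul_one]
    rw [hd]
    congr 1
    rw [abs_of_nonneg (by positivity)]
    ring
  rw [himg, lintegral_image_eq_lintegral_abs_det_fderiv_mul volume hs hderiv hinj g]
  simp_rw [hdet]
  rfl

lemma theta_set_char (r ρ : ℝ) (hρ : 0 < ρ) (hr0 : 0 < r) (hr1 : r < 1) :
    {θ : ℝ | 1 + ρ ^ 2 - 2 * ρ * Real.cos θ < r ^ 4} ∩ Ioo (-π) π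
      = Ioo (-(Real.arccos ((1 + ρ ^ 2 - r ^ 4) / (2 * ρ))))
          (Real.arccos ((1 + ρ ^ 2 - r ^ 4) / (2 * ρ))) := by
  set c : ℝ := (1 + ρ ^ 2 - r ^ 4) / (2 * ρ) with hc
  have hc0 : 0 < c := by
    apply div_pos _ (by positivity)
    have hr4 : r ^ 4 < 1 := by
      calc r ^ 4 < 1 ^ 4 := by exact pow_lt_pow_left₀ hr1 hr0.le (by norm_num)
        _ = 1 := one_pow 4
    nlinarith
  set α : ℝ := Real.arccos c with hα
  have hα2 : α ≤ π / 2 := Real.arccos_le_pi_div_two.mpr hc0.le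
  have hcond : ∀ θ : ℝ, (1 + ρ ^ 2 - 2 * ρ * Real.cos θ < r ^ 4 ↔ c < Real.cos θ) := by
    intro θ
    rw [hc, div_lt_iff₀ (by positivity)]
    constructor <;> intro h <;> nlinarith
  ext θ
  simp only [mem_inter_iff, mem_setOf_eq, mem_Ioo, hcond θ]
  constructor
  · rintro ⟨h1, h2, h3⟩
    have hc1 : c < 1 := lt_of_lt_of_le h1 (Real.cos_le_one θ)
    have habs : |θ| < α := by
      by_contra hcon
      push_neg at hcon
      have habs : |θ| < π := abs_lt.mpr ⟨h2, h3⟩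
      have := Real.cos_le_cos_of_nonneg_of_le_pi (Real.arccos_nonneg c) habs.le hcon
      rw [Real.cos_abs, Real.cos_arccos (by linarith) hc1.le] at this
      linarith
    exact abs_lt.mp habs
  · intro h
    have habs : |θ| < α := abs_lt.mpr h
    by_cases hc1 : c ≤ 1
    · have h1 : Real.cos α < Real.cos |θ| :=
        Real.cos_lt_cos_of_nonneg_of_le_pi (abs_nonneg θ)
          (by linarith [Real.pi_pos]) habs
      rw [Real.cos_abs, Real.cos_arccos (by linarith) hc1] at h1
      have hπ : |θ| < π := lt_of_lt_of_le habs (by linarith [Real.pi_pos])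
      exact ⟨h1, (abs_lt.mp hπ).1, (abs_lt.mp hπ).2⟩
    · exfalso
      push_neg at hc1
      rw [hα, Real.arccos_eq_zero.mpr hc1.le] at habs
      exact absurd habs (by simp [abs_nonneg])

lemma sq_abs_polar (p : ℝ × ℝ) (c : ℝ) :
    ‖Complex.polarCoord.symm p - (c : ℂ)‖ ^ 2
      = p.1 ^ 2 - 2 * p.1 * c * Real.cos p.2 + c ^ 2 := by
  rw [← Complex.normSq_eq_norm_sq, Complex.polarCoord_symm_apply]
  simp only [Complex.normSq_apply, Complex.sub_re, Complex.sub_im, Complex.mul_re, Complex.mul_im,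
    Complex.ofReal_re, Complex.ofReal_im, Complex.add_re, Complex.add_im, Complex.I_re,
    Complex.I_im, Complex.mul_re, Complex.mul_im]
  ring_nf
  nlinarith [Real.sin_sq_add_cos_sq p.2]

set_option maxHeartbeats 1000000 in
lemma polar_integrand_eq (n : ℕ) (L r : ℝ) (hr0 : 0 < r) (hr1 : r < 1)
    (p : ℝ × ℝ) (hp : p ∈ polarCoord.target) :
    ENNReal.ofReal p.1 * Set.indicator {u : ℂ | ‖1 - u‖ < r ^ 2}
      (fun u => ENNReal.ofReal ((r ^ 4)⁻¹) * ENNReal.ofReal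
        ((1 - ‖(1 - u) / (r : ℂ) ^ 2‖ ^ 2) ^ (n - 2) *
            ‖1 - (1 - u) / (r : ℂ) ^ 2‖ ^ 2 /
          ((‖1 - (r : ℂ) ^ 2 * ((1 - u) / (r : ℂ) ^ 2)‖ ^ (2 * L) -
              (1 - r ^ 2) ^ (2 * L)) *
            ‖1 - (r : ℂ) ^ 2 * ((1 - u) / (r : ℂ) ^ 2)‖ ^ 2)))
      (Complex.polarCoord.symm p)
    = Set.indicator {q : ℝ × ℝ | 1 + q.1 ^ 2 - 2 * q.1 * Real.cos q.2 < r ^ 4}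
        (fun q => ENNReal.ofReal (q.1 *
          ((r ^ 4)⁻¹ *
            (((r ^ 4 - (1 + q.1 ^ 2 - 2 * q.1 * Real.cos q.2)) / r ^ 4) ^ (n - 2) *
                ((q.1 ^ 2 - 2 * q.1 * (1 - r ^ 2) * Real.cos q.2 + (1 - r ^ 2) ^ 2) / r ^ 4) /
              ((q.1 ^ (2 * L) - (1 - r ^ 2) ^ (2 * L)) * q.1 ^ 2))))) p := by
  rw [polarCoord_target] at hp
  have hρ : 0 < p.1 := hp.1
  have hr2 : ((r : ℂ) ^ 2) ≠ 0 := pow_ne_zero 2 (Complex.ofReal_ne_zero.mpr hr0.ne')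
  set u : ℂ := Complex.polarCoord.symm p with hu
  have habsu : ‖u‖ = p.1 := by
    rw [hu, Complex.norm_polarCoord_symm, abs_of_pos hρ]
  have h1u : ‖1 - u‖ ^ 2 = 1 + p.1 ^ 2 - 2 * p.1 * Real.cos p.2 := by
    rw [norm_sub_rev]
    have : u - 1 = u - ((1 : ℝ) : ℂ) := by norm_num
    rw [this, hu, sq_abs_polar p 1]
    ring
  have hmem : (u ∈ {u : ℂ | ‖1 - u‖ < r ^ 2})
      ↔ (1 + p.1 ^ 2 - 2 * p.1 * Real.cos p.2 < r ^ 4) := by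
    simp only [mem_setOf_eq]
    rw [← h1u]
    constructor
    · intro h
      have h0 : (0:ℝ) ≤ ‖1 - u‖ := norm_nonneg _
      nlinarith
    · intro h
      have h0 : (0:ℝ) ≤ ‖1 - u‖ := norm_nonneg _
      nlinarith
  simp only [Set.indicator_apply]
  have hmem2 : ((p.1, p.2) ∈ {q : ℝ × ℝ | 1 + q.1 ^ 2 - 2 * q.1 * Real.cos q.2 < r ^ 4})
      ↔ (1 + p.1 ^ 2 - 2 * p.1 * Real.cos p.2 < r ^ 4) := Iff.rfl
  by_cases hc : 1 + p.1 ^ 2 - 2 * p.1 * Real.cos p.2 < r ^ 4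
  · rw [if_pos (hmem.mpr hc), if_pos (by exact hc)]
    -- value equality
    have hw : 1 - (r : ℂ) ^ 2 * ((1 - u) / (r : ℂ) ^ 2) = u := by
      linear_combination (u - 1) * mul_inv_cancel₀ hr2
    have habsr2 : ‖(r : ℂ) ^ 2‖ = r ^ 2 := by
      rw [norm_pow, Complex.norm_real, Real.norm_eq_abs, abs_of_pos hr0]
    have habsw2 : ‖(1 - u) / (r : ℂ) ^ 2‖ ^ 2
        = (1 + p.1 ^ 2 - 2 * p.1 * Real.cos p.2) / r ^ 4 := by
      rw [norm_div, habsr2, div_pow, h1u, show ((r:ℝ) ^ 2) ^ 2 = r ^ 4 by ring]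
    have h1w : ‖1 - (1 - u) / (r : ℂ) ^ 2‖ ^ 2
        = (p.1 ^ 2 - 2 * p.1 * (1 - r ^ 2) * Real.cos p.2 + (1 - r ^ 2) ^ 2) / r ^ 4 := by
      have heq : 1 - (1 - u) / (r : ℂ) ^ 2 = (u - ((1 - r ^ 2 : ℝ) : ℂ)) / (r : ℂ) ^ 2 := by
        push_cast
        linear_combination (-1 : ℂ) * mul_inv_cancel₀ hr2
      rw [heq, norm_div, habsr2, div_pow, hu, sq_abs_polar p (1 - r ^ 2),
        show ((r:ℝ) ^ 2) ^ 2 = r ^ 4 by ring]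
    rw [hw, habsu, habsw2, h1w]
    rw [← ENNReal.ofReal_mul (by positivity), ← ENNReal.ofReal_mul (by positivity)]
    congr 1
    have hnum : 1 - (1 + p.1 ^ 2 - 2 * p.1 * Real.cos p.2) / r ^ 4
        = (r ^ 4 - (1 + p.1 ^ 2 - 2 * p.1 * Real.cos p.2)) / r ^ 4 := by
      field_simp
    rw [hnum]
  · rw [if_neg (fun h => hc (hmem.mp h)), if_neg (by exact hc)]
    simp

set_option maxHeartbeats 1000000 in
lemma tonelli_step (n : ℕ) (L r : ℝ) (hr0 : 0 < r) (hr1 : r < 1) (hL : 0 < L) :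
    ∫⁻ p in polarCoord.target,
      Set.indicator {q : ℝ × ℝ | 1 + q.1 ^ 2 - 2 * q.1 * Real.cos q.2 < r ^ 4}
        (fun q => ENNReal.ofReal (q.1 *
          ((r ^ 4)⁻¹ *
            (((r ^ 4 - (1 + q.1 ^ 2 - 2 * q.1 * Real.cos q.2)) / r ^ 4) ^ (n - 2) *
                ((q.1 ^ 2 - 2 * q.1 * (1 - r ^ 2) * Real.cos q.2 + (1 - r ^ 2) ^ 2) / r ^ 4) /
              ((q.1 ^ (2 * L) - (1 - r ^ 2) ^ (2 * L)) * q.1 ^ 2))))) p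
    = ∫⁻ ρ in Ioo (1 - r ^ 2) (1 + r ^ 2),
        ∫⁻ θ in Ioo (-(Real.arccos ((1 + ρ ^ 2 - r ^ 4) / (2 * ρ))))
            (Real.arccos ((1 + ρ ^ 2 - r ^ 4) / (2 * ρ))),
          ENNReal.ofReal (ρ *
            ((r ^ 4)⁻¹ *
              (((r ^ 4 - (1 + ρ ^ 2 - 2 * ρ * Real.cos θ)) / r ^ 4) ^ (n - 2) *
                  ((ρ ^ 2 - 2 * ρ * (1 - r ^ 2) * Real.cos θ + (1 - r ^ 2) ^ 2) / r ^ 4) /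
                ((ρ ^ (2 * L) - (1 - r ^ 2) ^ (2 * L)) * ρ ^ 2)))) := by
  have h2L : (0:ℝ) < 2 * L := by linarith
  set g : ℝ × ℝ → ℝ := fun q => q.1 *
      ((r ^ 4)⁻¹ *
        (((r ^ 4 - (1 + q.1 ^ 2 - 2 * q.1 * Real.cos q.2)) / r ^ 4) ^ (n - 2) *
            ((q.1 ^ 2 - 2 * q.1 * (1 - r ^ 2) * Real.cos q.2 + (1 - r ^ 2) ^ 2) / r ^ 4) /
          ((q.1 ^ (2 * L) - (1 - r ^ 2) ^ (2 * L)) * q.1 ^ 2))) with hgdef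
  have hgmeas : Measurable g := by
    rw [hgdef]
    have hc1 : Continuous fun q : ℝ × ℝ => q.1 ^ (2 * L) :=
      (Real.continuous_rpow_const h2L.le).comp continuous_fst
    have hnum : Continuous fun q : ℝ × ℝ =>
        q.1 * ((r ^ 4)⁻¹ * (((r ^ 4 - (1 + q.1 ^ 2 - 2 * q.1 * Real.cos q.2)) / r ^ 4) ^ (n - 2) *
          ((q.1 ^ 2 - 2 * q.1 * (1 - r ^ 2) * Real.cos q.2 + (1 - r ^ 2) ^ 2) / r ^ 4))) := by
      fun_prop
    have hden : Continuous fun q : ℝ × ℝ =>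
        (q.1 ^ (2 * L) - (1 - r ^ 2) ^ (2 * L)) * q.1 ^ 2 := by
      fun_prop
    have : (fun q : ℝ × ℝ => q.1 *
        ((r ^ 4)⁻¹ * (((r ^ 4 - (1 + q.1 ^ 2 - 2 * q.1 * Real.cos q.2)) / r ^ 4) ^ (n - 2) *
            ((q.1 ^ 2 - 2 * q.1 * (1 - r ^ 2) * Real.cos q.2 + (1 - r ^ 2) ^ 2) / r ^ 4) /
          ((q.1 ^ (2 * L) - (1 - r ^ 2) ^ (2 * L)) * q.1 ^ 2))))
        = fun q : ℝ × ℝ =>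
          (q.1 * ((r ^ 4)⁻¹ * (((r ^ 4 - (1 + q.1 ^ 2 - 2 * q.1 * Real.cos q.2)) / r ^ 4) ^ (n - 2) *
            ((q.1 ^ 2 - 2 * q.1 * (1 - r ^ 2) * Real.cos q.2 + (1 - r ^ 2) ^ 2) / r ^ 4)))) /
          ((q.1 ^ (2 * L) - (1 - r ^ 2) ^ (2 * L)) * q.1 ^ 2) := by
      funext q
      ring
    rw [this]
    exact hnum.measurable.div hden.measurable
  have hS : MeasurableSet {q : ℝ × ℝ | 1 + q.1 ^ 2 - 2 * q.1 * Real.cos q.2 < r ^ 4} := by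
    have : IsOpen {q : ℝ × ℝ | 1 + q.1 ^ 2 - 2 * q.1 * Real.cos q.2 < r ^ 4} := by
      have hcont : Continuous fun q : ℝ × ℝ => 1 + q.1 ^ 2 - 2 * q.1 * Real.cos q.2 := by
        fun_prop
      exact isOpen_lt hcont continuous_const
    exact this.measurableSet
  have hFmeas : Measurable (Set.indicator {q : ℝ × ℝ | 1 + q.1 ^ 2 - 2 * q.1 * Real.cos q.2 < r ^ 4}
      (fun q => ENNReal.ofReal (g q))) :=
    (hgmeas.ennreal_ofReal).indicator hS
  rw [polarCoord_target, Measure.volume_eq_prod, ← Measure.prod_restrict]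
  rw [lintegral_prod _ hFmeas.aemeasurable]
  -- now reduce inner integrals
  have hstep : ∀ ρ ∈ Ioi (0:ℝ),
      (∫⁻ θ in Ioo (-π) π,
        Set.indicator {q : ℝ × ℝ | 1 + q.1 ^ 2 - 2 * q.1 * Real.cos q.2 < r ^ 4}
          (fun q => ENNReal.ofReal (g q)) (ρ, θ))
      = ∫⁻ θ in Ioo (-(Real.arccos ((1 + ρ ^ 2 - r ^ 4) / (2 * ρ))))
            (Real.arccos ((1 + ρ ^ 2 - r ^ 4) / (2 * ρ))),
          ENNReal.ofReal (g (ρ, θ)) := by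
    intro ρ hρ
    have hT : MeasurableSet {θ : ℝ | 1 + ρ ^ 2 - 2 * ρ * Real.cos θ < r ^ 4} := by
      have : IsOpen {θ : ℝ | 1 + ρ ^ 2 - 2 * ρ * Real.cos θ < r ^ 4} :=
        isOpen_lt (by fun_prop) continuous_const
      exact this.measurableSet
    have heq : (fun θ => Set.indicator {q : ℝ × ℝ | 1 + q.1 ^ 2 - 2 * q.1 * Real.cos q.2 < r ^ 4}
        (fun q => ENNReal.ofReal (g q)) (ρ, θ))
        = Set.indicator {θ : ℝ | 1 + ρ ^ 2 - 2 * ρ * Real.cos θ < r ^ 4}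
            (fun θ => ENNReal.ofReal (g (ρ, θ))) := by
      funext θ
      by_cases h : 1 + ρ ^ 2 - 2 * ρ * Real.cos θ < r ^ 4 <;>
        simp [Set.indicator_apply, h]
    rw [heq, lintegral_indicator hT, Measure.restrict_restrict hT,
      theta_set_char r ρ hρ hr0 hr1]
  rw [setLIntegral_congr_fun measurableSet_Ioi hstep]
  -- restrict outer integral to Ioo (1-r²) (1+r²)
  have ha : (0:ℝ) < 1 - r ^ 2 := by nlinarith
  rw [← lintegral_indicator measurableSet_Ioi, ← lintegral_indicator measurableSet_Ioo]
  congr 1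
  funext ρ
  by_cases hmem : ρ ∈ Ioo (1 - r ^ 2) (1 + r ^ 2)
  · rw [Set.indicator_of_mem hmem, Set.indicator_of_mem (mem_Ioi.mpr (lt_trans ha hmem.1))]
  · rw [Set.indicator_of_notMem hmem]
    by_cases hρ : ρ ∈ Ioi (0:ℝ)
    · rw [Set.indicator_of_mem hρ]
      have hρ0 : (0:ℝ) < ρ := hρ
      have hge : (1 + ρ ^ 2 - r ^ 4) / (2 * ρ) ≥ 1 := by
        rw [ge_iff_le, le_div_iff₀ (by positivity)]
        simp only [mem_Ioo, not_and_or, not_lt] at hmem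
        rcases hmem with h | h
        · nlinarith
        · nlinarith
      rw [Real.arccos_eq_zero.mpr hge, neg_zero, Ioo_self]
      simp
    · rw [Set.indicator_of_notMem hρ]

set_option maxHeartbeats 1000000 in
lemma cov_rho_to_s (r : ℝ) (hr0 : 0 < r) (hr1 : r < 1) (Φ : ℝ → ENNReal) :
    ∫⁻ ρ in Ioo (1 - r ^ 2) (1 + r ^ 2), Φ ρ
      = ∫⁻ s in Ioo ((1 - r ^ 2) / (1 + r ^ 2)) 1,
          ENNReal.ofReal ((1 - r ^ 2) / s ^ 2) * Φ ((1 - r ^ 2) / s) := by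
  have ha : (0:ℝ) < 1 - r ^ 2 := by nlinarith
  have hb : (0:ℝ) < 1 + r ^ 2 := by positivity
  have hs0 : (0:ℝ) < (1 - r ^ 2) / (1 + r ^ 2) := div_pos ha hb
  set σ : ℝ → ℝ := fun s => (1 - r ^ 2) / s with hσ
  have himg : Ioo (1 - r ^ 2) (1 + r ^ 2) = σ '' Ioo ((1 - r ^ 2) / (1 + r ^ 2)) 1 := by
    ext x
    constructor
    · intro hx
      have hx0 : 0 < x := lt_trans ha hx.1
      refine ⟨(1 - r ^ 2) / x, ⟨?_, ?_⟩, ?_⟩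
      · rw [div_lt_div_iff₀ hb hx0]
        nlinarith [hx.2]
      · rw [div_lt_one hx0]
        exact hx.1
      · rw [hσ]
        field_simp
    · rintro ⟨s, hs, rfl⟩
      have hs0' : 0 < s := lt_trans hs0 hs.1
      constructor
      · rw [hσ]
        simp only
        rw [lt_div_iff₀ hs0']
        nlinarith [hs.2]
      · rw [hσ]
        simp only
        rw [div_lt_iff₀ hs0']
        have := hs.1
        rw [div_lt_iff₀ hb] at this
        linarith
  have hderiv : ∀ s ∈ Ioo ((1 - r ^ 2) / (1 + r ^ 2)) 1,
      HasFDerivWithinAt σ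
        (ContinuousLinearMap.smulRight (1 : ℝ →L[ℝ] ℝ) (-((1 - r ^ 2) / s ^ 2)))
        (Ioo ((1 - r ^ 2) / (1 + r ^ 2)) 1) s := by
    intro s hs
    have hs0' : 0 < s := lt_trans hs0 hs.1
    have h1 : HasDerivAt σ (-((1 - r ^ 2) / s ^ 2)) s := by
      have h2 : HasDerivAt (fun x : ℝ => (1 - r ^ 2) * x⁻¹)
          ((1 - r ^ 2) * (-(s ^ 2)⁻¹)) s := (hasDerivAt_inv hs0'.ne').const_mul (1 - r ^ 2)
      have h3 : (fun x : ℝ => (1 - r ^ 2) * x⁻¹) = σ := by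
        funext x
        rw [hσ]
        simp only
        rw [div_eq_mul_inv]
      have h4 : (1 - r ^ 2) * (-(s ^ 2)⁻¹) = -((1 - r ^ 2) / s ^ 2) := by
        field_simp
      rw [h3, h4] at h2
      exact h2
    exact h1.hasFDerivAt.hasFDerivWithinAt
  have hinj : InjOn σ (Ioo ((1 - r ^ 2) / (1 + r ^ 2)) 1) := by
    intro x hx y hy h
    have hx0 : 0 < x := lt_trans hs0 hx.1
    have hy0 : 0 < y := lt_trans hs0 hy.1
    rw [hσ] at h
    simp only at h
    rw [div_eq_div_iff hx0.ne' hy0.ne'] at h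
    exact (mul_left_cancel₀ ha.ne' h).symm
  rw [himg, lintegral_image_eq_lintegral_abs_det_fderiv_mul volume measurableSet_Ioo hderiv hinj Φ]
  refine setLIntegral_congr_fun measurableSet_Ioo (fun s hs => ?_)
  congr 2
  · have hdet : (ContinuousLinearMap.smulRight (1 : ℝ →L[ℝ] ℝ) (-((1 - r ^ 2) / s ^ 2))).det
        = -((1 - r ^ 2) / s ^ 2) := by
      have heq : ContinuousLinearMap.smulRight (1 : ℝ →L[ℝ] ℝ) (-((1 - r ^ 2) / s ^ 2))
          = (-((1 - r ^ 2) / s ^ 2)) • (1 : ℝ →L[ℝ] ℝ) := by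
        ext x
        simp [mul_comm]
      rw [heq, ContinuousLinearMap.det]
      rw [ContinuousLinearMap.coe_smul, ContinuousLinearMap.one_def, ContinuousLinearMap.coe_id]
      rw [LinearMap.det_smul, LinearMap.det_id, Module.finrank_self, pow_one, mul_one]
    rw [hdet, abs_neg, abs_of_nonneg (by positivity)]

/-- `α(s,r) = arccos(((1+r²)s + (1-r²)/s)/2)`. -/
noncomputable def alphaAngle (r s : ℝ) : ℝ :=
  Real.arccos (((1 + r ^ 2) * s + (1 - r ^ 2) / s) / 2)

/-- The double integral `K(L,r)` of Lemma 3.1. -/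
noncomputable def K (n : ℕ) (L r : ℝ) : ℝ :=
  ∫ s in ((1 - r ^ 2) / (1 + r ^ 2))..1,
    s ^ (2 * L - n) / (1 - s ^ (2 * L)) *
      ∫ θ in (0 : ℝ)..alphaAngle r s,
        (2 * Real.cos θ - 2 * Real.cos (alphaAngle r s)) ^ (n - 2) *
          (s + 1 / s - 2 * Real.cos θ)

set_option maxHeartbeats 2000000 in
lemma pointwise_s (n : ℕ) (hn : 2 ≤ n) (L : ℝ) (hL : 0 < L) (r : ℝ) (hr0 : 0 < r) (hr1 : r < 1)
    (s : ℝ) (hs : s ∈ Ioo ((1 - r ^ 2) / (1 + r ^ 2)) 1) :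
    ENNReal.ofReal ((1 - r ^ 2) / s ^ 2) *
      ∫⁻ θ in Ioo
          (-(Real.arccos ((1 + ((1 - r ^ 2) / s) ^ 2 - r ^ 4) / (2 * ((1 - r ^ 2) / s)))))
          (Real.arccos ((1 + ((1 - r ^ 2) / s) ^ 2 - r ^ 4) / (2 * ((1 - r ^ 2) / s)))),
        ENNReal.ofReal ((1 - r ^ 2) / s *
          ((r ^ 4)⁻¹ *
            (((r ^ 4 - (1 + ((1 - r ^ 2) / s) ^ 2 - 2 * ((1 - r ^ 2) / s) * Real.cos θ)) / r ^ 4) ^ (n - 2) *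
              ((((1 - r ^ 2) / s) ^ 2 - 2 * ((1 - r ^ 2) / s) * (1 - r ^ 2) * Real.cos θ + (1 - r ^ 2) ^ 2) / r ^ 4) /
              ((((1 - r ^ 2) / s) ^ (2 * L) - (1 - r ^ 2) ^ (2 * L)) * ((1 - r ^ 2) / s) ^ 2))))
      = ENNReal.ofReal ((2 * (r ^ (4 * n))⁻¹ * (1 - r ^ 2) ^ ((n : ℝ) - 2 * L)) *
          (s ^ (2 * L - n) / (1 - s ^ (2 * L)) *
            ∫ θ in (0 : ℝ)..alphaAngle r s,
              (2 * Real.cos θ - 2 * Real.cos (alphaAngle r s)) ^ (n - 2) *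
                (s + 1 / s - 2 * Real.cos θ))) := by
  have ha : 0 < 1 - r ^ 2 := by nlinarith
  have hb : 0 < 1 + r ^ 2 := by positivity
  have hs0 : 0 < s := lt_trans (div_pos ha hb) hs.1
  have hs1 : s < 1 := hs.2
  set a : ℝ := 1 - r ^ 2 with hadef
  set ρ : ℝ := a / s with hρdef
  have hρ0 : 0 < ρ := div_pos ha hs0
  have hρa : a < ρ := by
    rw [hρdef, lt_div_iff₀ hs0]
    nlinarith
  have hρb : ρ < 1 + r ^ 2 := by
    rw [hρdef, div_lt_iff₀ hs0]
    have := hs.1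
    rw [div_lt_iff₀ hb] at this
    linarith [this]
  -- the arccos argument
  have hcarg : (1 + ρ ^ 2 - r ^ 4) / (2 * ρ) = ((1 + r ^ 2) * s + a / s) / 2 := by
    rw [hρdef]
    field_simp
    ring
  have hAα : Real.arccos ((1 + ρ ^ 2 - r ^ 4) / (2 * ρ)) = alphaAngle r s := by
    rw [hcarg]; rfl
  set α : ℝ := alphaAngle r s with hαdef
  -- bounds on the arccos argument
  set carg : ℝ := ((1 + r ^ 2) * s + a / s) / 2 with hcargdef
  have hcarg0 : 0 < carg := by
    have : 0 < a / s := div_pos ha hs0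
    have : 0 < (1 + r ^ 2) * s := by positivity
    rw [hcargdef]; linarith
  have hcarg1 : carg ≤ 1 := by
    have hsb : 1 - r ^ 2 < s * (1 + r ^ 2) := by
      have h1 := hs.1
      rw [hadef] at h1
      rw [div_lt_iff₀ hb] at h1
      linarith
    have ht : ((1 - r ^ 2) / s) * s = 1 - r ^ 2 := div_mul_cancel₀ _ hs0.ne'
    rw [hcargdef, div_le_one (by norm_num : (0:ℝ) < 2), hadef]
    nlinarith [mul_nonneg (sub_pos.mpr hs1).le (sub_pos.mpr hsb).le, ht, hs0]
  have hcosα : Real.cos α = carg := by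
    rw [hαdef]
    exact Real.cos_arccos (by linarith) hcarg1
  have hα0 : 0 ≤ α := Real.arccos_nonneg _
  have hα2 : α ≤ π / 2 := Real.arccos_le_pi_div_two.mpr hcarg0.le
  -- positivity of denominators
  have h2L : (0:ℝ) < 2 * L := by linarith
  have hrpow : a ^ (2 * L) < ρ ^ (2 * L) := Real.rpow_lt_rpow ha.le hρa h2L
  have hD : 0 < ρ ^ (2 * L) - a ^ (2 * L) := by linarith
  have hsL1 : s ^ (2 * L) < 1 := Real.rpow_lt_one hs0.le hs1 h2L
  have hsLpos : 0 < s ^ (2 * L) := Real.rpow_pos_of_pos hs0 _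
  -- the inner function G
  set G : ℝ → ℝ := fun θ =>
    (2 * Real.cos θ - 2 * Real.cos α) ^ (n - 2) * (s + 1 / s - 2 * Real.cos θ) with hGdef
  have hGcont : Continuous G := by
    rw [hGdef]; fun_prop
  -- the constant C
  set C : ℝ := a * ρ ^ (n - 2) / ((ρ ^ (2 * L) - a ^ (2 * L)) * r ^ (4 * n)) with hCdef
  have hC0 : 0 ≤ C := by
    apply div_nonneg
    · positivity
    · positivity
  -- the integrand identity
  set E : ℝ → ℝ := fun θ =>
    ρ * ((r ^ 4)⁻¹ *
      (((r ^ 4 - (1 + ρ ^ 2 - 2 * ρ * Real.cos θ)) / r ^ 4) ^ (n - 2) *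
        ((ρ ^ 2 - 2 * ρ * a * Real.cos θ + a ^ 2) / r ^ 4) /
        ((ρ ^ (2 * L) - a ^ (2 * L)) * ρ ^ 2))) with hEdef
  have hEG : ∀ θ : ℝ, E θ = C * G θ := by
    intro θ
    have h1 : r ^ 4 - (1 + ρ ^ 2 - 2 * ρ * Real.cos θ) = ρ * (2 * Real.cos θ - 2 * Real.cos α) := by
      rw [hcosα, hcargdef, hρdef]
      field_simp
      ring
    have h2 : ρ ^ 2 - 2 * ρ * a * Real.cos θ + a ^ 2 = ρ * a * (s + 1 / s - 2 * Real.cos θ) := by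
      rw [hρdef]
      field_simp
      ring
    have h3 : r ^ (4 * n) = (r ^ 4) ^ (n - 2) * r ^ 8 := by
      rw [← pow_mul, ← pow_add]
      congr 1
      omega
    simp only [hEdef, hGdef, hCdef]
    rw [h1, h2, div_pow, mul_pow, h3]
    have hr4 : (r:ℝ) ^ 4 ≠ 0 := by positivity
    have hP : ((r:ℝ) ^ 4) ^ (n - 2) ≠ 0 := by positivity
    field_simp
  -- nonnegativity of E on the interval
  have hEnn : ∀ θ ∈ Ioo (-α) α, 0 ≤ E θ := by
    intro θ hθ
    have habs : |θ| < α := abs_lt.mpr ⟨by linarith [hθ.1], hθ.2⟩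
    have hcos : Real.cos α < Real.cos θ := by
      have := Real.cos_lt_cos_of_nonneg_of_le_pi (abs_nonneg θ)
        (by linarith [Real.pi_pos] : α ≤ π) habs
      rwa [Real.cos_abs] at this
    rw [hEdef]
    have h1 : 0 ≤ r ^ 4 - (1 + ρ ^ 2 - 2 * ρ * Real.cos θ) := by
      have : 1 + ρ ^ 2 - 2 * ρ * Real.cos θ < r ^ 4 := by
        have hlt : carg < Real.cos θ := by rw [← hcosα]; exact hcos
        rw [← hcarg] at hlt
        rw [div_lt_iff₀ (by positivity)] at hlt
        nlinarith
      linarith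
    have h2 : 0 ≤ ρ ^ 2 - 2 * ρ * a * Real.cos θ + a ^ 2 := by
      nlinarith [Real.cos_le_one θ, sq_nonneg (ρ - a)]
    have hr4 : (0:ℝ) < r ^ 4 := by positivity
    apply mul_nonneg hρ0.le
    apply mul_nonneg (by positivity)
    apply div_nonneg
    · apply mul_nonneg
      · positivity
      · positivity
    · positivity
  -- rewrite ∫⁻ as ofReal of integral
  have hEcont : Continuous E := by
    rw [hEdef]; fun_prop
  have hEint : IntegrableOn E (Ioo (-α) α) volume :=
    (hEcont.integrableOn_Icc (a := -α) (b := α)).mono_set Ioo_subset_Icc_self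
  have step1 : ∫⁻ θ in Ioo (-α) α, ENNReal.ofReal (E θ)
      = ENNReal.ofReal (∫ θ in Ioo (-α) α, E θ) := by
    rw [← ofReal_integral_eq_lintegral_ofReal hEint]
    exact (ae_restrict_iff' measurableSet_Ioo).mpr (Filter.Eventually.of_forall hEnn)
  have step2 : ∫ θ in Ioo (-α) α, E θ = ∫ θ in (-α)..α, E θ := by
    rw [intervalIntegral.integral_of_le (by linarith : -α ≤ α), integral_Ioc_eq_integral_Ioo]
  have step3 : ∫ θ in (-α)..α, E θ = C * (2 * ∫ θ in (0:ℝ)..α, G θ) := by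
    have hfun : E = fun θ => C * G θ := funext hEG
    rw [hfun, intervalIntegral.integral_const_mul]
    congr 1
    have hGint : ∀ c d : ℝ, IntervalIntegrable G volume c d := fun c d =>
      hGcont.intervalIntegrable c d
    rw [← intervalIntegral.integral_add_adjacent_intervals (hGint (-α) 0) (hGint 0 α)]
    have hneg : ∫ θ in (0:ℝ)..α, G (-θ) = ∫ θ in (-α)..(0:ℝ), G θ := by
      simpa using intervalIntegral.integral_comp_neg (a := (0:ℝ)) (b := α) (f := G)
    have hGeven : ∀ θ, G (-θ) = G θ := by
      intro θ; rw [hGdef]; simp [Real.cos_neg]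
    rw [← hneg]
    simp only [hGeven]
    ring
  -- now the scalar identity
  have hscal : (1 - r ^ 2) / s ^ 2 * (C * (2 * ∫ θ in (0:ℝ)..α, G θ))
      = (2 * (r ^ (4 * n))⁻¹ * (1 - r ^ 2) ^ ((n : ℝ) - 2 * L)) *
          (s ^ (2 * L - n) / (1 - s ^ (2 * L)) * ∫ θ in (0:ℝ)..α, G θ) := by
    have key : a / s ^ 2 * (C * 2)
        = (2 * (r ^ (4 * n))⁻¹ * a ^ ((n : ℝ) - 2 * L)) *
            (s ^ (2 * L - (n:ℝ)) / (1 - s ^ (2 * L))) := by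
      have hρpow : ρ ^ (n - 2) = a ^ (n - 2) / s ^ (n - 2) := div_pow a s (n - 2)
      have hρL : ρ ^ (2 * L) = a ^ (2 * L) / s ^ (2 * L) :=
        Real.div_rpow ha.le hs0.le (2 * L)
      have haL : a ^ ((n:ℝ) - 2 * L) = a ^ (n:ℕ) / a ^ (2 * L) := by
        rw [Real.rpow_sub ha, Real.rpow_natCast]
      have hsL : s ^ (2 * L - (n:ℝ)) = s ^ (2 * L) / s ^ (n:ℕ) := by
        rw [Real.rpow_sub hs0, Real.rpow_natCast]
      have han : a ^ (n - 2 : ℕ) * a ^ 2 = a ^ (n : ℕ) := by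
        rw [← pow_add]; congr 1; omega
      have hsn : s ^ (n - 2 : ℕ) * s ^ 2 = s ^ (n : ℕ) := by
        rw [← pow_add]; congr 1; omega
      have haLpos : 0 < a ^ (2 * L) := Real.rpow_pos_of_pos ha _
      have h1sL : 1 - s ^ (2 * L) ≠ 0 := by linarith
      have hrn : (r:ℝ) ^ (4 * n) ≠ 0 := by positivity
      have hDeq : ρ ^ (2 * L) - a ^ (2 * L) = a ^ (2 * L) * (1 - s ^ (2 * L)) / s ^ (2 * L) := by
        rw [hρL]
        field_simp
      rw [hCdef, hρpow, hDeq, haL, hsL, ← han, ← hsn]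
      field_simp
    calc (1 - r ^ 2) / s ^ 2 * (C * (2 * ∫ θ in (0:ℝ)..α, G θ))
        = (a / s ^ 2 * (C * 2)) * ∫ θ in (0:ℝ)..α, G θ := by rw [hadef]; ring
      _ = ((2 * (r ^ (4 * n))⁻¹ * a ^ ((n : ℝ) - 2 * L)) *
            (s ^ (2 * L - (n:ℝ)) / (1 - s ^ (2 * L)))) * ∫ θ in (0:ℝ)..α, G θ := by rw [key]
      _ = _ := by rw [hadef]; ring
  -- assemble
  rw [hAα]
  calc ENNReal.ofReal ((1 - r ^ 2) / s ^ 2) * ∫⁻ θ in Ioo (-α) α, ENNReal.ofReal (E θ)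
      = ENNReal.ofReal ((1 - r ^ 2) / s ^ 2) * ENNReal.ofReal (C * (2 * ∫ θ in (0:ℝ)..α, G θ)) := by
        rw [step1, step2, step3]
    _ = ENNReal.ofReal ((1 - r ^ 2) / s ^ 2 * (C * (2 * ∫ θ in (0:ℝ)..α, G θ))) := by
        rw [← ENNReal.ofReal_mul (by positivity)]
    _ = _ := by rw [hscal, hGdef, hαdef]

set_option maxHeartbeats 1000000 in
lemma K_side (n : ℕ) (hn : 2 ≤ n) (L : ℝ) (hL : 0 < L) (r : ℝ) (hr0 : 0 < r) (hr1 : r < 1) :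
    (∫⁻ s in Ioo ((1 - r ^ 2) / (1 + r ^ 2)) 1,
      ENNReal.ofReal ((2 * (r ^ (4 * n))⁻¹ * (1 - r ^ 2) ^ ((n : ℝ) - 2 * L)) *
        (s ^ (2 * L - n) / (1 - s ^ (2 * L)) *
          ∫ θ in (0 : ℝ)..alphaAngle r s,
            (2 * Real.cos θ - 2 * Real.cos (alphaAngle r s)) ^ (n - 2) *
              (s + 1 / s - 2 * Real.cos θ)))).toReal
    = (2 * (r ^ (4 * n))⁻¹ * (1 - r ^ 2) ^ ((n : ℝ) - 2 * L)) * K n L r := by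
  have ha : (0:ℝ) < 1 - r ^ 2 := by nlinarith
  have hb : (0:ℝ) < 1 + r ^ 2 := by positivity
  have hc0 : (0:ℝ) < (1 - r ^ 2) / (1 + r ^ 2) := div_pos ha hb
  have h2L : (0:ℝ) < 2 * L := by linarith
  set c₀ : ℝ := (1 - r ^ 2) / (1 + r ^ 2) with hc₀def
  set cst : ℝ := 2 * (r ^ (4 * n))⁻¹ * (1 - r ^ 2) ^ ((n : ℝ) - 2 * L) with hcst
  have hcst0 : 0 ≤ cst := by
    rw [hcst]
    have : (0:ℝ) < (1 - r ^ 2) ^ ((n : ℝ) - 2 * L) := Real.rpow_pos_of_pos ha _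
    positivity
  set IK : ℝ → ℝ := fun s =>
    ∫ θ in (0 : ℝ)..alphaAngle r s,
      (2 * Real.cos θ - 2 * Real.cos (alphaAngle r s)) ^ (n - 2) *
        (s + 1 / s - 2 * Real.cos θ) with hIKdef
  set gK : ℝ → ℝ := fun s => s ^ (2 * L - n) / (1 - s ^ (2 * L)) * IK s with hgKdef
  -- nonnegativity
  have hIKnn : ∀ s : ℝ, 0 < s → 0 ≤ IK s := by
    intro s hs0
    rw [hIKdef]
    apply intervalIntegral.integral_nonneg (Real.arccos_nonneg _)
    intro θ hθ
    have hcosle : Real.cos (alphaAngle r s) ≤ Real.cos θ :=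
      Real.cos_le_cos_of_nonneg_of_le_pi hθ.1 (Real.arccos_le_pi _) hθ.2
    apply mul_nonneg
    · apply pow_nonneg
      linarith
    · have h1 : Real.cos θ ≤ 1 := Real.cos_le_one θ
      have ht : s * (1 / s) = 1 := mul_one_div_cancel hs0.ne'
      nlinarith [sq_nonneg (s - 1)]
  have hnn : ∀ s ∈ Ioo c₀ 1, 0 ≤ cst * gK s := by
    intro s hs
    have hs0 : 0 < s := lt_trans hc0 hs.1
    apply mul_nonneg hcst0
    rw [hgKdef]
    apply mul_nonneg
    · apply div_nonneg (Real.rpow_nonneg hs0.le _)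
      have : s ^ (2 * L) < 1 := Real.rpow_lt_one hs0.le hs.2 h2L
      linarith
    · exact hIKnn s hs0
  -- measurability via continuity
  have hmax : Continuous fun x : ℝ => max x c₀ := continuous_id.max continuous_const
  have hmaxpos : ∀ x : ℝ, 0 < max x c₀ := fun x => lt_of_lt_of_le hc0 (le_max_right _ _)
  have halpha : Continuous fun x : ℝ => alphaAngle r (max x c₀) := by
    apply Real.continuous_arccos.comp
    apply Continuous.div_const
    exact (continuous_const.mul hmax).add
      (continuous_const.div hmax fun x => (hmaxpos x).ne')
  have hIKc : Continuous fun x : ℝ =>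
      ∫ θ in (0:ℝ)..(alphaAngle r (max x c₀)),
        (2 * Real.cos θ - 2 * Real.cos (alphaAngle r (max x c₀))) ^ (n - 2) *
          (max x c₀ + 1 / max x c₀ - 2 * Real.cos θ) := by
    apply intervalIntegral.continuous_parametric_intervalIntegral_of_continuous
      (f := fun x θ => (2 * Real.cos θ - 2 * Real.cos (alphaAngle r (max x c₀))) ^ (n - 2) *
        (max x c₀ + 1 / max x c₀ - 2 * Real.cos θ)) (s := fun x => alphaAngle r (max x c₀))
    · have h1 : Continuous fun p : ℝ × ℝ => Real.cos p.2 := Real.continuous_cos.comp continuous_snd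
      have h2 : Continuous fun p : ℝ × ℝ => Real.cos (alphaAngle r (max p.1 c₀)) :=
        Real.continuous_cos.comp (halpha.comp continuous_fst)
      have h3 : Continuous fun p : ℝ × ℝ => max p.1 c₀ := hmax.comp continuous_fst
      have h4 : Continuous fun p : ℝ × ℝ => 1 / max p.1 c₀ :=
        continuous_const.div h3 fun p => (hmaxpos p.1).ne'
      exact (((continuous_const.mul h1).sub (continuous_const.mul h2)).pow _).mul
        ((h3.add h4).sub (continuous_const.mul h1))
    · exact halpha
  have hIKon : ContinuousOn IK (Ioo c₀ 1) := by
    apply ContinuousOn.congr hIKc.continuousOn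
    intro s hs
    have : max s c₀ = s := max_eq_left (le_of_lt hs.1)
    rw [hIKdef]
    simp only [this]
  have hgKon : ContinuousOn (fun s => cst * gK s) (Ioo c₀ 1) := by
    apply ContinuousOn.mul continuousOn_const
    rw [hgKdef]
    apply ContinuousOn.mul _ hIKon
    apply ContinuousOn.div
    · intro s hs
      have hs0 : 0 < s := lt_trans hc0 hs.1
      exact (Real.continuousAt_rpow_const s _ (Or.inl hs0.ne')).continuousWithinAt
    · exact (continuous_const.sub (Real.continuous_rpow_const h2L.le)).continuousOn
    · intro s hs
      have hs0 : 0 < s := lt_trans hc0 hs.1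
      have : s ^ (2 * L) < 1 := Real.rpow_lt_one hs0.le hs.2 h2L
      linarith
  have hmeas : AEStronglyMeasurable (fun s => cst * gK s) (volume.restrict (Ioo c₀ 1)) :=
    hgKon.aestronglyMeasurable measurableSet_Ioo
  have keyint : ∫ s in Ioo c₀ 1, cst * gK s
      = (∫⁻ s in Ioo c₀ 1, ENNReal.ofReal (cst * gK s)).toReal := by
    apply integral_eq_lintegral_of_nonneg_ae
    · exact (ae_restrict_iff' measurableSet_Ioo).mpr (Filter.Eventually.of_forall hnn)
    · exact hmeas
  rw [← keyint]
  rw [MeasureTheory.integral_const_mul]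
  congr 1
  rw [K, ← hc₀def]
  rw [intervalIntegral.integral_of_le (by
    have h2 : c₀ < 1 := by
      rw [hc₀def, div_lt_one hb]
      nlinarith
    linarith : c₀ ≤ (1:ℝ))]
  rw [integral_Ioc_eq_integral_Ioo]

set_option maxHeartbeats 2000000 in
/-- Lemma 3.1: the disk-integral expression of the variance equals `2(1-r²)^{n-2} K(L,r)`. -/
theorem disk_integral_eq_K
    (n : ℕ) (hn : 2 ≤ n) (L : ℝ) (hL : 0 < L) (r : ℝ) (hr0 : 0 < r) (hr1 : r < 1) :
    r ^ (4 * n) * (1 - r ^ 2) ^ (2 * L - 2) *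
      ∫ w in {w : ℂ | ‖w‖ < 1},
        (1 - ‖w‖ ^ 2) ^ (n - 2) * ‖1 - w‖ ^ 2 /
          ((‖1 - (r : ℂ) ^ 2 * w‖ ^ (2 * L) - (1 - r ^ 2) ^ (2 * L)) *
            ‖1 - (r : ℂ) ^ 2 * w‖ ^ 2)
    = 2 * (1 - r ^ 2) ^ (n - 2) * K n L r := by
  have ha : (0:ℝ) < 1 - r ^ 2 := by nlinarith
  have hb : (0:ℝ) < 1 + r ^ 2 := by positivity
  have h2L : (0:ℝ) < 2 * L := by linarith
  have hDm : MeasurableSet {w : ℂ | ‖w‖ < 1} :=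
    (isOpen_lt continuous_norm continuous_const).measurableSet
  have hDum : MeasurableSet {u : ℂ | ‖1 - u‖ < r ^ 2} := by
    have : Continuous fun u : ℂ => ‖1 - u‖ :=
      continuous_norm.comp (by fun_prop)
    exact (isOpen_lt this continuous_const).measurableSet
  have habs2 : Continuous fun w : ℂ => ‖1 - (r : ℂ) ^ 2 * w‖ :=
    continuous_norm.comp (by fun_prop)
  have hnumc : Continuous fun w : ℂ =>
      (1 - ‖w‖ ^ 2) ^ (n - 2) * ‖1 - w‖ ^ 2 := by
    have h2 : Continuous fun w : ℂ => ‖1 - w‖ :=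
      continuous_norm.comp (by fun_prop)
    exact ((continuous_const.sub (continuous_norm.pow 2)).pow _).mul (h2.pow 2)
  have hdenc : Continuous fun w : ℂ =>
      (‖1 - (r : ℂ) ^ 2 * w‖ ^ (2 * L) - (1 - r ^ 2) ^ (2 * L)) *
        ‖1 - (r : ℂ) ^ 2 * w‖ ^ 2 :=
    (((Real.continuous_rpow_const h2L.le).comp habs2).sub continuous_const).mul (habs2.pow 2)
  have hfm : Measurable fun w : ℂ =>
      (1 - ‖w‖ ^ 2) ^ (n - 2) * ‖1 - w‖ ^ 2 /
        ((‖1 - (r : ℂ) ^ 2 * w‖ ^ (2 * L) - (1 - r ^ 2) ^ (2 * L)) *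
          ‖1 - (r : ℂ) ^ 2 * w‖ ^ 2) :=
    hnumc.measurable.div hdenc.measurable
  have hfnn : ∀ w ∈ {w : ℂ | ‖w‖ < 1},
      0 ≤ (1 - ‖w‖ ^ 2) ^ (n - 2) * ‖1 - w‖ ^ 2 /
        ((‖1 - (r : ℂ) ^ 2 * w‖ ^ (2 * L) - (1 - r ^ 2) ^ (2 * L)) *
          ‖1 - (r : ℂ) ^ 2 * w‖ ^ 2) := by
    intro w hw
    have hw1 : ‖w‖ < 1 := hw
    have hnum : 0 ≤ (1 - ‖w‖ ^ 2) ^ (n - 2) * ‖1 - w‖ ^ 2 := by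
      apply mul_nonneg
      · apply pow_nonneg
        have : ‖w‖ ^ 2 < 1 := by
          nlinarith [norm_nonneg w]
        linarith
      · positivity
    have hgt : 1 - r ^ 2 < ‖1 - (r : ℂ) ^ 2 * w‖ := by
      have htri : ‖(1:ℂ)‖ - ‖(r:ℂ) ^ 2 * w‖
          ≤ ‖1 - (r:ℂ) ^ 2 * w‖ := norm_sub_norm_le _ _
      have h1 : ‖(1:ℂ)‖ = 1 := norm_one
      have h2 : ‖(r:ℂ) ^ 2 * w‖ = r ^ 2 * ‖w‖ := by
        rw [norm_mul, norm_pow, Complex.norm_real, Real.norm_eq_abs, abs_of_pos hr0]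
      have h3 : r ^ 2 * ‖w‖ < r ^ 2 * 1 :=
        mul_lt_mul_of_pos_left hw1 (by positivity)
      rw [h1, h2] at htri
      linarith
    have hden : 0 < (‖1 - (r : ℂ) ^ 2 * w‖ ^ (2 * L) - (1 - r ^ 2) ^ (2 * L)) *
        ‖1 - (r : ℂ) ^ 2 * w‖ ^ 2 := by
      apply mul_pos
      · have := Real.rpow_lt_rpow ha.le hgt h2L
        linarith
      · have : (0:ℝ) < ‖1 - (r : ℂ) ^ 2 * w‖ := lt_trans ha hgt
        positivity
    exact div_nonneg hnum hden.le
  have h1 : (∫ w in {w : ℂ | ‖w‖ < 1},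
      (1 - ‖w‖ ^ 2) ^ (n - 2) * ‖1 - w‖ ^ 2 /
        ((‖1 - (r : ℂ) ^ 2 * w‖ ^ (2 * L) - (1 - r ^ 2) ^ (2 * L)) *
          ‖1 - (r : ℂ) ^ 2 * w‖ ^ 2))
      = (∫⁻ w in {w : ℂ | ‖w‖ < 1}, ENNReal.ofReal
          ((1 - ‖w‖ ^ 2) ^ (n - 2) * ‖1 - w‖ ^ 2 /
            ((‖1 - (r : ℂ) ^ 2 * w‖ ^ (2 * L) - (1 - r ^ 2) ^ (2 * L)) *
              ‖1 - (r : ℂ) ^ 2 * w‖ ^ 2))).toReal :=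
    integral_eq_lintegral_of_nonneg_ae
      ((ae_restrict_iff' hDm).mpr (Filter.Eventually.of_forall hfnn))
      hfm.aestronglyMeasurable
  have hchain : (∫⁻ w in {w : ℂ | ‖w‖ < 1}, ENNReal.ofReal
        ((1 - ‖w‖ ^ 2) ^ (n - 2) * ‖1 - w‖ ^ 2 /
          ((‖1 - (r : ℂ) ^ 2 * w‖ ^ (2 * L) - (1 - r ^ 2) ^ (2 * L)) *
            ‖1 - (r : ℂ) ^ 2 * w‖ ^ 2)))
      = ∫⁻ s in Ioo ((1 - r ^ 2) / (1 + r ^ 2)) 1,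
          ENNReal.ofReal ((2 * (r ^ (4 * n))⁻¹ * (1 - r ^ 2) ^ ((n : ℝ) - 2 * L)) *
            (s ^ (2 * L - n) / (1 - s ^ (2 * L)) *
              ∫ θ in (0 : ℝ)..alphaAngle r s,
                (2 * Real.cos θ - 2 * Real.cos (alphaAngle r s)) ^ (n - 2) *
                  (s + 1 / s - 2 * Real.cos θ))) := by
    calc (∫⁻ w in {w : ℂ | ‖w‖ < 1}, ENNReal.ofReal
        ((1 - ‖w‖ ^ 2) ^ (n - 2) * ‖1 - w‖ ^ 2 /
          ((‖1 - (r : ℂ) ^ 2 * w‖ ^ (2 * L) - (1 - r ^ 2) ^ (2 * L)) *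
            ‖1 - (r : ℂ) ^ 2 * w‖ ^ 2)))
        = ∫⁻ u in {u : ℂ | ‖1 - u‖ < r ^ 2},
            ENNReal.ofReal ((r ^ 4)⁻¹) * ENNReal.ofReal
              ((1 - ‖(1 - u) / (r : ℂ) ^ 2‖ ^ 2) ^ (n - 2) *
                  ‖1 - (1 - u) / (r : ℂ) ^ 2‖ ^ 2 /
                ((‖1 - (r : ℂ) ^ 2 * ((1 - u) / (r : ℂ) ^ 2)‖ ^ (2 * L) -
                    (1 - r ^ 2) ^ (2 * L)) *
                  ‖1 - (r : ℂ) ^ 2 * ((1 - u) / (r : ℂ) ^ 2)‖ ^ 2)) :=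
          lintegral_disk_eq r hr0 _
      _ = ∫⁻ u, Set.indicator {u : ℂ | ‖1 - u‖ < r ^ 2}
            (fun u => ENNReal.ofReal ((r ^ 4)⁻¹) * ENNReal.ofReal
              ((1 - ‖(1 - u) / (r : ℂ) ^ 2‖ ^ 2) ^ (n - 2) *
                  ‖1 - (1 - u) / (r : ℂ) ^ 2‖ ^ 2 /
                ((‖1 - (r : ℂ) ^ 2 * ((1 - u) / (r : ℂ) ^ 2)‖ ^ (2 * L) -
                    (1 - r ^ 2) ^ (2 * L)) *
                  ‖1 - (r : ℂ) ^ 2 * ((1 - u) / (r : ℂ) ^ 2)‖ ^ 2))) u :=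
          (lintegral_indicator hDum _).symm
      _ = ∫⁻ p in polarCoord.target, ENNReal.ofReal p.1 *
            Set.indicator {u : ℂ | ‖1 - u‖ < r ^ 2}
              (fun u => ENNReal.ofReal ((r ^ 4)⁻¹) * ENNReal.ofReal
                ((1 - ‖(1 - u) / (r : ℂ) ^ 2‖ ^ 2) ^ (n - 2) *
                    ‖1 - (1 - u) / (r : ℂ) ^ 2‖ ^ 2 /
                  ((‖1 - (r : ℂ) ^ 2 * ((1 - u) / (r : ℂ) ^ 2)‖ ^ (2 * L) -
                      (1 - r ^ 2) ^ (2 * L)) *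
                    ‖1 - (r : ℂ) ^ 2 * ((1 - u) / (r : ℂ) ^ 2)‖ ^ 2)))
              (Complex.polarCoord.symm p) :=
          (Complex.lintegral_comp_polarCoord_symm_aux2 _).symm
      _ = ∫⁻ p in polarCoord.target,
            Set.indicator {q : ℝ × ℝ | 1 + q.1 ^ 2 - 2 * q.1 * Real.cos q.2 < r ^ 4}
              (fun q => ENNReal.ofReal (q.1 *
                ((r ^ 4)⁻¹ *
                  (((r ^ 4 - (1 + q.1 ^ 2 - 2 * q.1 * Real.cos q.2)) / r ^ 4) ^ (n - 2) *
                      ((q.1 ^ 2 - 2 * q.1 * (1 - r ^ 2) * Real.cos q.2 + (1 - r ^ 2) ^ 2) / r ^ 4) /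
                    ((q.1 ^ (2 * L) - (1 - r ^ 2) ^ (2 * L)) * q.1 ^ 2))))) p :=
          setLIntegral_congr_fun polarCoord.open_target.measurableSet
            (fun p hp => polar_integrand_eq n L r hr0 hr1 p hp)
      _ = ∫⁻ ρ in Ioo (1 - r ^ 2) (1 + r ^ 2),
            ∫⁻ θ in Ioo (-(Real.arccos ((1 + ρ ^ 2 - r ^ 4) / (2 * ρ))))
                (Real.arccos ((1 + ρ ^ 2 - r ^ 4) / (2 * ρ))),
              ENNReal.ofReal (ρ *
                ((r ^ 4)⁻¹ *
                  (((r ^ 4 - (1 + ρ ^ 2 - 2 * ρ * Real.cos θ)) / r ^ 4) ^ (n - 2) *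
                      ((ρ ^ 2 - 2 * ρ * (1 - r ^ 2) * Real.cos θ + (1 - r ^ 2) ^ 2) / r ^ 4) /
                    ((ρ ^ (2 * L) - (1 - r ^ 2) ^ (2 * L)) * ρ ^ 2)))) :=
          tonelli_step n L r hr0 hr1 hL
      _ = ∫⁻ s in Ioo ((1 - r ^ 2) / (1 + r ^ 2)) 1,
            ENNReal.ofReal ((1 - r ^ 2) / s ^ 2) *
              ∫⁻ θ in Ioo
                  (-(Real.arccos ((1 + ((1 - r ^ 2) / s) ^ 2 - r ^ 4) / (2 * ((1 - r ^ 2) / s)))))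
                  (Real.arccos ((1 + ((1 - r ^ 2) / s) ^ 2 - r ^ 4) / (2 * ((1 - r ^ 2) / s)))),
                ENNReal.ofReal ((1 - r ^ 2) / s *
                  ((r ^ 4)⁻¹ *
                    (((r ^ 4 - (1 + ((1 - r ^ 2) / s) ^ 2 - 2 * ((1 - r ^ 2) / s) * Real.cos θ)) / r ^ 4) ^ (n - 2) *
                        ((((1 - r ^ 2) / s) ^ 2 - 2 * ((1 - r ^ 2) / s) * (1 - r ^ 2) * Real.cos θ + (1 - r ^ 2) ^ 2) / r ^ 4) /
                      ((((1 - r ^ 2) / s) ^ (2 * L) - (1 - r ^ 2) ^ (2 * L)) * ((1 - r ^ 2) / s) ^ 2)))) :=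
          cov_rho_to_s r hr0 hr1 _
      _ = ∫⁻ s in Ioo ((1 - r ^ 2) / (1 + r ^ 2)) 1,
            ENNReal.ofReal ((2 * (r ^ (4 * n))⁻¹ * (1 - r ^ 2) ^ ((n : ℝ) - 2 * L)) *
              (s ^ (2 * L - n) / (1 - s ^ (2 * L)) *
                ∫ θ in (0 : ℝ)..alphaAngle r s,
                  (2 * Real.cos θ - 2 * Real.cos (alphaAngle r s)) ^ (n - 2) *
                    (s + 1 / s - 2 * Real.cos θ))) :=
          setLIntegral_congr_fun measurableSet_Ioo
            (fun s hs => pointwise_s n hn L hL r hr0 hr1 s hs)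
  rw [h1, hchain, K_side n hn L hL r hr0 hr1]
  -- final scalar arithmetic
  have hr4n : (r:ℝ) ^ (4 * n) ≠ 0 := by positivity
  have hpow : (1 - r ^ 2) ^ (2 * L - 2) * (1 - r ^ 2) ^ ((n : ℝ) - 2 * L)
      = (1 - r ^ 2) ^ (n - 2 : ℕ) := by
    rw [← Real.rpow_add ha]
    have hexp : (2 * L - 2) + ((n : ℝ) - 2 * L) = ((n - 2 : ℕ) : ℝ) := by
      rw [Nat.cast_sub hn]
      push_cast
      ring
    rw [hexp, Real.rpow_natCast]
  calc r ^ (4 * n) * (1 - r ^ 2) ^ (2 * L - 2) *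
        ((2 * (r ^ (4 * n))⁻¹ * (1 - r ^ 2) ^ ((n : ℝ) - 2 * L)) * K n L r)
      = (r ^ (4 * n) * (r ^ (4 * n))⁻¹) *
          (2 * ((1 - r ^ 2) ^ (2 * L - 2) * (1 - r ^ 2) ^ ((n : ℝ) - 2 * L)) * K n L r) := by
        ring
    _ = 2 * (1 - r ^ 2) ^ (n - 2 : ℕ) * K n L r := by
        rw [mul_inv_cancel₀ hr4n, hpow]
        ring
end

section
/- Let n ≥ 1 be an integer and M > n/2 a real number. Then Γ(M+1/2)/Γ(M+1) · Γ(2M−n+2)/Γ(2M+1) + Γ(M−1/2)/Γ(M) · Γ(2M−n)/Γ(2M−1) − 2 · Γ(M+1/2)/Γ(M+1) · Γ(2M−n+1)/Γ(2M) = 2^{−n} · Γ(M − n/2) Γ(M − (n−1)/2)/(Γ(M+1))² · (M + n(n−1)/2). -/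
/-- Lemma 4.1: for `M > n/2`,
`Γ(M+1/2)/Γ(M+1) · Γ(2M-n+2)/Γ(2M+1) + Γ(M-1/2)/Γ(M) · Γ(2M-n)/Γ(2M-1)
 - 2 Γ(M+1/2)/Γ(M+1) · Γ(2M-n+1)/Γ(2M)
 = 2⁻ⁿ Γ(M-n/2)Γ(M-(n-1)/2)/Γ(M+1)² · (M + n(n-1)/2)`. -/
theorem gamma_combination_identity
    (n : ℕ) (hn : 1 ≤ n) (M : ℝ) (hM : (n : ℝ) / 2 < M) :
    Real.Gamma (M + 1 / 2) / Real.Gamma (M + 1) *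
          (Real.Gamma (2 * M - n + 2) / Real.Gamma (2 * M + 1)) +
        Real.Gamma (M - 1 / 2) / Real.Gamma M *
          (Real.Gamma (2 * M - n) / Real.Gamma (2 * M - 1)) -
        2 * (Real.Gamma (M + 1 / 2) / Real.Gamma (M + 1) *
          (Real.Gamma (2 * M - n + 1) / Real.Gamma (2 * M)))
      = 2 ^ (-(n : ℝ)) *
          (Real.Gamma (M - (n : ℝ) / 2) * Real.Gamma (M - ((n : ℝ) - 1) / 2) /
            Real.Gamma (M + 1) ^ 2) *
          (M + n * ((n : ℝ) - 1) / 2) := by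
  have hn1 : (1 : ℝ) ≤ (n : ℝ) := by exact_mod_cast hn
  have hA : (0 : ℝ) < M - (n : ℝ) / 2 := by linarith
  have hM0 : (0 : ℝ) < M := by linarith
  have hMh : (0 : ℝ) < M - 1 / 2 := by linarith
  set t : ℝ := (2 : ℝ) ^ (2 * M) with ht
  have ht0 : (0 : ℝ) < t := Real.rpow_pos_of_pos two_pos _
  have hsp : (0 : ℝ) < Real.sqrt Real.pi := Real.sqrt_pos.mpr Real.pi_pos
  have h2n : (0 : ℝ) < (2 : ℝ) ^ n := by positivity
  -- generic power fact : 2^(r - 2M) * t = 2^r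
  have key : ∀ r : ℝ, (2 : ℝ) ^ (r - 2 * M) * t = (2 : ℝ) ^ r := by
    intro r
    rw [ht, ← Real.rpow_add two_pos]
    ring_nf
  have h2cast : ((2 : ℝ) ^ n) = (2 : ℝ) ^ ((n : ℝ)) := by
    rw [← Real.rpow_natCast 2 n]
  -- gamma positivity
  have gA := Real.Gamma_pos_of_pos hA
  have gA2 := Real.Gamma_pos_of_pos (by linarith : (0:ℝ) < M - (n:ℝ)/2 + 1/2)
  have gM := Real.Gamma_pos_of_pos hM0
  have gM2 := Real.Gamma_pos_of_pos (by linarith : (0:ℝ) < M + 1/2)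
  have gMh := Real.Gamma_pos_of_pos hMh
  -- duplication instances, solved for Γ(2s)
  -- Γ(2M - n + 2)
  have hB1 : Real.Gamma (2 * M - (n:ℝ) + 2)
      = ((M - (n:ℝ)/2) * Real.Gamma (M - (n:ℝ)/2)) *
        ((M - (n:ℝ)/2 + 1/2) * Real.Gamma (M - (n:ℝ)/2 + 1/2)) * (2 * t)
        / ((2:ℝ) ^ n * Real.sqrt Real.pi) := by
    have h := Real.Gamma_mul_Gamma_add_half (M - (n:ℝ)/2 + 1)
    rw [show 2 * (M - (n:ℝ)/2 + 1) = 2*M - (n:ℝ) + 2 by ring,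
        show (1:ℝ) - (2*M - (n:ℝ) + 2) = ((n:ℝ) - 1) - 2*M by ring] at h
    have hk := key ((n:ℝ) - 1)
    have hk' : (2:ℝ) ^ (((n:ℝ)) - 1 - 2*M) * (2 * t) = (2:ℝ) ^ n := by
      rw [h2cast]
      have : (2:ℝ) ^ ((n:ℝ) - 1) * 2 = (2:ℝ) ^ ((n:ℝ)) := by
        rw [Real.rpow_sub two_pos, Real.rpow_one]
        field_simp
      rw [show (2:ℝ) ^ (((n:ℝ)) - 1 - 2*M) * (2 * t)
            = ((2:ℝ) ^ (((n:ℝ)) - 1 - 2*M) * t) * 2 by ring, key, this]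
    rw [Real.Gamma_add_one hA.ne',
        show M - (n:ℝ)/2 + 1 + 1/2 = (M - (n:ℝ)/2 + 1/2) + 1 by ring,
        Real.Gamma_add_one (by linarith : M - (n:ℝ)/2 + 1/2 ≠ 0)] at h
    rw [eq_div_iff (by positivity)]
    calc Real.Gamma (2*M - (n:ℝ) + 2) * ((2:ℝ)^n * Real.sqrt Real.pi)
        = Real.Gamma (2*M - (n:ℝ) + 2) * (2:ℝ) ^ (((n:ℝ)) - 1 - 2*M) * Real.sqrt Real.pi * (2*t) := by
          rw [show Real.Gamma (2*M - (n:ℝ) + 2) * (2:ℝ) ^ (((n:ℝ)) - 1 - 2*M) * Real.sqrt Real.pi * (2*t)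
              = Real.Gamma (2*M - (n:ℝ) + 2) * ((2:ℝ) ^ (((n:ℝ)) - 1 - 2*M) * (2*t)) * Real.sqrt Real.pi by ring, hk']
          try ring
      _ = _ := by rw [← h]; try ring
  -- Γ(2M - n)
  have hB2 : Real.Gamma (2 * M - (n:ℝ))
      = Real.Gamma (M - (n:ℝ)/2) * Real.Gamma (M - (n:ℝ)/2 + 1/2) * t
        / (2 * (2:ℝ) ^ n * Real.sqrt Real.pi) := by
    have h := Real.Gamma_mul_Gamma_add_half (M - (n:ℝ)/2)
    rw [show 2 * (M - (n:ℝ)/2) = 2*M - (n:ℝ) by ring,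
        show (1:ℝ) - (2*M - (n:ℝ)) = ((n:ℝ) + 1) - 2*M by ring] at h
    have hk' : (2:ℝ) ^ (((n:ℝ)) + 1 - 2*M) * t = 2 * (2:ℝ) ^ n := by
      rw [key, h2cast, Real.rpow_add two_pos, Real.rpow_one]; ring
    rw [eq_div_iff (by positivity)]
    calc Real.Gamma (2*M - (n:ℝ)) * (2 * (2:ℝ)^n * Real.sqrt Real.pi)
        = Real.Gamma (2*M - (n:ℝ)) * ((2:ℝ) ^ (((n:ℝ)) + 1 - 2*M) * t) * Real.sqrt Real.pi := by
          rw [hk']; try ring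
      _ = _ := by rw [show Real.Gamma (2*M - (n:ℝ)) * ((2:ℝ) ^ (((n:ℝ)) + 1 - 2*M) * t) * Real.sqrt Real.pi
              = (Real.Gamma (2*M - (n:ℝ)) * (2:ℝ) ^ (((n:ℝ)) + 1 - 2*M) * Real.sqrt Real.pi) * t by ring, ← h]
  -- Γ(2M - n + 1)
  have hB3 : Real.Gamma (2 * M - (n:ℝ) + 1)
      = Real.Gamma (M - (n:ℝ)/2 + 1/2) * ((M - (n:ℝ)/2) * Real.Gamma (M - (n:ℝ)/2)) * t
        / ((2:ℝ) ^ n * Real.sqrt Real.pi) := by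
    have h := Real.Gamma_mul_Gamma_add_half (M - (n:ℝ)/2 + 1/2)
    rw [show 2 * (M - (n:ℝ)/2 + 1/2) = 2*M - (n:ℝ) + 1 by ring,
        show (1:ℝ) - (2*M - (n:ℝ) + 1) = ((n:ℝ)) - 2*M by ring,
        show M - (n:ℝ)/2 + 1/2 + 1/2 = (M - (n:ℝ)/2) + 1 by ring,
        Real.Gamma_add_one hA.ne'] at h
    have hk' : (2:ℝ) ^ (((n:ℝ)) - 2*M) * t = (2:ℝ) ^ n := by rw [key, h2cast]
    rw [eq_div_iff (by positivity)]
    calc Real.Gamma (2*M - (n:ℝ) + 1) * ((2:ℝ)^n * Real.sqrt Real.pi)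
        = Real.Gamma (2*M - (n:ℝ) + 1) * ((2:ℝ) ^ (((n:ℝ)) - 2*M) * t) * Real.sqrt Real.pi := by
          rw [hk']; try ring
      _ = _ := by rw [show Real.Gamma (2*M - (n:ℝ) + 1) * ((2:ℝ) ^ (((n:ℝ)) - 2*M) * t) * Real.sqrt Real.pi
              = (Real.Gamma (2*M - (n:ℝ) + 1) * (2:ℝ) ^ (((n:ℝ)) - 2*M) * Real.sqrt Real.pi) * t by ring, ← h]
  -- Γ(2M + 1)
  have hB4 : Real.Gamma (2 * M + 1)
      = Real.Gamma (M + 1/2) * (M * Real.Gamma M) * t / Real.sqrt Real.pi := by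
    have h := Real.Gamma_mul_Gamma_add_half (M + 1/2)
    rw [show 2 * (M + 1/2) = 2*M + 1 by ring,
        show (1:ℝ) - (2*M + 1) = (0:ℝ) - 2*M by ring,
        show M + 1/2 + 1/2 = M + 1 by ring,
        Real.Gamma_add_one hM0.ne'] at h
    have hk' : (2:ℝ) ^ ((0:ℝ) - 2*M) * t = 1 := by rw [key, Real.rpow_zero]
    rw [eq_div_iff hsp.ne']
    calc Real.Gamma (2*M + 1) * Real.sqrt Real.pi
        = Real.Gamma (2*M + 1) * ((2:ℝ) ^ ((0:ℝ) - 2*M) * t) * Real.sqrt Real.pi := by rw [hk']; try ring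
      _ = _ := by rw [show Real.Gamma (2*M + 1) * ((2:ℝ) ^ ((0:ℝ) - 2*M) * t) * Real.sqrt Real.pi
              = (Real.Gamma (2*M + 1) * (2:ℝ) ^ ((0:ℝ) - 2*M) * Real.sqrt Real.pi) * t by ring, ← h]
  -- Γ(2M)
  have hB5 : Real.Gamma (2 * M)
      = Real.Gamma M * Real.Gamma (M + 1/2) * t / (2 * Real.sqrt Real.pi) := by
    have h := Real.Gamma_mul_Gamma_add_half M
    have hk' : (2:ℝ) ^ ((1:ℝ) - 2*M) * t = 2 := by rw [key, Real.rpow_one]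
    rw [eq_div_iff (by positivity)]
    calc Real.Gamma (2*M) * (2 * Real.sqrt Real.pi)
        = Real.Gamma (2*M) * ((2:ℝ) ^ ((1:ℝ) - 2*M) * t) * Real.sqrt Real.pi := by rw [hk']; try ring
      _ = _ := by rw [show Real.Gamma (2*M) * ((2:ℝ) ^ ((1:ℝ) - 2*M) * t) * Real.sqrt Real.pi
              = (Real.Gamma (2*M) * (2:ℝ) ^ ((1:ℝ) - 2*M) * Real.sqrt Real.pi) * t by ring, ← h]
  -- Γ(2M - 1)
  have hB6 : Real.Gamma (2 * M - 1)
      = Real.Gamma (M - 1/2) * Real.Gamma M * t / (4 * Real.sqrt Real.pi) := by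
    have h := Real.Gamma_mul_Gamma_add_half (M - 1/2)
    rw [show 2 * (M - 1/2) = 2*M - 1 by ring,
        show (1:ℝ) - (2*M - 1) = (2:ℝ) - 2*M by ring,
        show M - 1/2 + 1/2 = M by ring] at h
    have hk' : (2:ℝ) ^ ((2:ℝ) - 2*M) * t = 4 := by
      rw [key]; norm_num [show ((2:ℝ)) = ((2:ℕ):ℝ) by norm_num, Real.rpow_natCast]
    rw [eq_div_iff (by positivity)]
    calc Real.Gamma (2*M - 1) * (4 * Real.sqrt Real.pi)
        = Real.Gamma (2*M - 1) * ((2:ℝ) ^ ((2:ℝ) - 2*M) * t) * Real.sqrt Real.pi := by rw [hk']; try ring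
      _ = _ := by rw [show Real.Gamma (2*M - 1) * ((2:ℝ) ^ ((2:ℝ) - 2*M) * t) * Real.sqrt Real.pi
              = (Real.Gamma (2*M - 1) * (2:ℝ) ^ ((2:ℝ) - 2*M) * Real.sqrt Real.pi) * t by ring, ← h]
  -- rewrite the goal
  have hrn : (2:ℝ) ^ (-(n:ℝ)) = ((2:ℝ) ^ n)⁻¹ := by
    rw [Real.rpow_neg (by norm_num), h2cast]
  have T1 : Real.Gamma (M + 1/2) / Real.Gamma (M+1) * (Real.Gamma (2*M - (n:ℝ) + 2) / Real.Gamma (2*M+1))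
      = 2*(M - (n:ℝ)/2)*(M - (n:ℝ)/2 + 1/2) * Real.Gamma (M - (n:ℝ)/2) * Real.Gamma (M - (n:ℝ)/2 + 1/2)
        / ((2:ℝ)^n * (M * Real.Gamma M)^2) := by
    rw [Real.Gamma_add_one hM0.ne', hB1, hB4]
    field_simp [ht0.ne', hsp.ne', hM0.ne', gM.ne', gMh.ne', gM2.ne', h2n.ne']
  have T2 : Real.Gamma (M - 1/2) / Real.Gamma M * (Real.Gamma (2*M - (n:ℝ)) / Real.Gamma (2*M - 1))
      = 2 * Real.Gamma (M - (n:ℝ)/2) * Real.Gamma (M - (n:ℝ)/2 + 1/2) / ((2:ℝ)^n * Real.Gamma M ^ 2) := by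
    have gB2 : 0 < Real.Gamma (2*M - (n:ℝ)) := Real.Gamma_pos_of_pos (by linarith)
    have gB6 : 0 < Real.Gamma (2*M - 1) := Real.Gamma_pos_of_pos (by linarith)
    have hC2 : Real.Gamma (2*M - (n:ℝ)) * (2 * (2:ℝ)^n * Real.sqrt Real.pi)
        = Real.Gamma (M - (n:ℝ)/2) * Real.Gamma (M - (n:ℝ)/2 + 1/2) * t := by
      rw [hB2]; field_simp
    have hC6 : Real.Gamma (2*M - 1) * (4 * Real.sqrt Real.pi)
        = Real.Gamma (M - 1/2) * Real.Gamma M * t := by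
      rw [hB6]; field_simp
    rw [div_mul_div_comm, div_eq_div_iff (mul_pos gM gB6).ne' (by positivity)]
    apply mul_right_cancel₀ (show ((2 * (2:ℝ)^n * Real.sqrt Real.pi) * (4 * Real.sqrt Real.pi)) ≠ 0 by positivity)
    linear_combination (Real.Gamma (M - 1/2) * ((2:ℝ)^n * Real.Gamma M ^ 2) * (4 * Real.sqrt Real.pi)) * hC2
      - (2 * Real.Gamma (M - (n:ℝ)/2) * Real.Gamma (M - (n:ℝ)/2 + 1/2) * Real.Gamma M * (2 * (2:ℝ)^n * Real.sqrt Real.pi)) * hC6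
  have T3 : Real.Gamma (M + 1/2) / Real.Gamma (M+1) * (Real.Gamma (2*M - (n:ℝ) + 1) / Real.Gamma (2*M))
      = 2*(M - (n:ℝ)/2) * Real.Gamma (M - (n:ℝ)/2) * Real.Gamma (M - (n:ℝ)/2 + 1/2)
        / ((2:ℝ)^n * (M * Real.Gamma M ^ 2)) := by
    rw [Real.Gamma_add_one hM0.ne', hB3, hB5]
    field_simp [ht0.ne', hsp.ne', hM0.ne', gM.ne', gMh.ne', gM2.ne', h2n.ne']
  rw [show M - ((n:ℝ) - 1)/2 = M - (n:ℝ)/2 + 1/2 by ring, T1, T2, T3,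
      Real.Gamma_add_one hM0.ne', hrn]
  field_simp [hM0.ne', gM.ne', h2n.ne']
  ring
end

section
/- Let n ≥ 2 be an integer. Then, as the real parameter L → ∞, (2L)^{n+1/2} · ∑_{k=1}^∞ Γ(2Lk − n + 1)/Γ(2Lk + 3/2) converges to ζ(n + 1/2), where ζ is the Riemann zeta function. -/
open Real Filter Finset Topology

lemma myGamma_add_nat {y : ℝ} (hy : 0 < y) (m : ℕ) :
    Real.Gamma (y + m) = Real.Gamma y * ∏ j ∈ Finset.range m, (y + j) := by
  induction m with
  | zero => simp
  | succ m ih =>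
      have h1 : y + (m + 1 : ℕ) = (y + m) + 1 := by push_cast; ring
      have h2 : (0:ℝ) < y + m := by positivity
      rw [h1, Real.Gamma_add_one h2.ne', ih, Finset.prod_range_succ]
      ring

lemma half_upper {y : ℝ} (hy : 0 < y) :
    Real.Gamma (y + 1/2) ≤ Real.Gamma y * y ^ (1/2 : ℝ) := by
  have hc := Real.convexOn_log_Gamma
  have h1 : (0:ℝ) < y + 1 := by linarith
  have key := hc.2 (Set.mem_Ioi.2 hy) (Set.mem_Ioi.2 h1)
    (by norm_num : (0:ℝ) ≤ 1/2) (by norm_num : (0:ℝ) ≤ 1/2) (by norm_num)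
  have hmid : (1/2 : ℝ) • y + (1/2 : ℝ) • (y + 1) = y + 1/2 := by
    simp [smul_eq_mul]; ring
  rw [hmid] at key
  simp only [Function.comp_apply, smul_eq_mul] at key
  have hG : 0 < Real.Gamma y := Real.Gamma_pos_of_pos hy
  have hGm : 0 < Real.Gamma (y + 1/2) := Real.Gamma_pos_of_pos (by linarith)
  have hG1 : Real.Gamma (y + 1) = y * Real.Gamma y := Real.Gamma_add_one hy.ne'
  rw [hG1, Real.log_mul hy.ne' hG.ne'] at key
  have : Real.log (Real.Gamma (y + 1/2)) ≤ Real.log (Real.Gamma y) + 1/2 * Real.log y := by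
    linarith
  calc Real.Gamma (y + 1/2) = Real.exp (Real.log (Real.Gamma (y + 1/2))) :=
        (Real.exp_log hGm).symm
    _ ≤ Real.exp (Real.log (Real.Gamma y) + 1/2 * Real.log y) := Real.exp_le_exp.2 this
    _ = Real.Gamma y * y ^ (1/2 : ℝ) := by
        rw [Real.exp_add, Real.exp_log hG, Real.rpow_def_of_pos hy]
        ring_nf

lemma half_lower {y : ℝ} (hy : 0 < y) :
    Real.Gamma y * y * (y + 1/2) ^ (-(1/2) : ℝ) ≤ Real.Gamma (y + 1/2) := by
  have hc := Real.convexOn_log_Gamma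
  have h1 : (0:ℝ) < y + 1/2 := by linarith
  have h2 : (0:ℝ) < y + 3/2 := by linarith
  have key := hc.2 (Set.mem_Ioi.2 h1) (Set.mem_Ioi.2 h2)
    (by norm_num : (0:ℝ) ≤ 1/2) (by norm_num : (0:ℝ) ≤ 1/2) (by norm_num)
  have hmid : (1/2 : ℝ) • (y + 1/2) + (1/2 : ℝ) • (y + 3/2) = y + 1 := by
    simp [smul_eq_mul]; ring
  rw [hmid] at key
  simp only [Function.comp_apply, smul_eq_mul] at key
  have hG : 0 < Real.Gamma y := Real.Gamma_pos_of_pos hy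
  have hGh : 0 < Real.Gamma (y + 1/2) := Real.Gamma_pos_of_pos h1
  have hG1 : Real.Gamma (y + 1) = y * Real.Gamma y := Real.Gamma_add_one hy.ne'
  have hG3 : Real.Gamma (y + 3/2) = (y + 1/2) * Real.Gamma (y + 1/2) := by
    have : y + 3/2 = (y + 1/2) + 1 := by ring
    rw [this, Real.Gamma_add_one h1.ne']
  rw [hG1, hG3, Real.log_mul hy.ne' hG.ne', Real.log_mul h1.ne' hGh.ne'] at key
  have hkey : Real.log y + Real.log (Real.Gamma y) - 1/2 * Real.log (y + 1/2)
      ≤ Real.log (Real.Gamma (y + 1/2)) := by linarith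
  calc Real.Gamma y * y * (y + 1/2) ^ (-(1/2) : ℝ)
      = Real.exp (Real.log y + Real.log (Real.Gamma y) - 1/2 * Real.log (y + 1/2)) := by
        rw [Real.exp_sub, Real.exp_add, Real.exp_log hy, Real.exp_log hG,
          Real.rpow_def_of_pos h1]
        rw [show Real.log (y+1/2) * -(1/2 : ℝ) = -(1/2 * Real.log (y+1/2)) by ring,
          Real.exp_neg]
        ring
    _ ≤ Real.exp (Real.log (Real.Gamma (y + 1/2))) := Real.exp_le_exp.2 hkey
    _ = Real.Gamma (y + 1/2) := Real.exp_log hGh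

lemma gamma_split (n : ℕ) {y : ℝ} (hy : 0 < y) :
    Real.Gamma (y + ((n:ℝ) + 1/2)) =
      Real.Gamma (y + 1/2) * ∏ j ∈ Finset.range n, (y + 1/2 + j) := by
  rw [show y + ((n:ℝ) + 1/2) = (y + 1/2) + n by ring, myGamma_add_nat (by linarith)]

lemma prod_pos' (n : ℕ) {y : ℝ} (hy : 0 < y) :
    0 < ∏ j ∈ Finset.range n, (y + 1/2 + j) :=
  Finset.prod_pos fun j _ => by positivity

lemma ratio_lower (n : ℕ) {y : ℝ} (hy : 0 < y) :
    1 / (y ^ (1/2 : ℝ) * ∏ j ∈ Finset.range n, (y + 1/2 + j)) ≤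
      Real.Gamma y / Real.Gamma (y + ((n:ℝ) + 1/2)) := by
  have hP := prod_pos' n hy
  have hG : 0 < Real.Gamma y := Real.Gamma_pos_of_pos hy
  have hGh : 0 < Real.Gamma (y + 1/2) := Real.Gamma_pos_of_pos (by linarith)
  have hyr : 0 < y ^ (1/2 : ℝ) := Real.rpow_pos_of_pos hy _
  rw [gamma_split n hy]
  calc 1 / (y ^ (1/2 : ℝ) * ∏ j ∈ Finset.range n, (y + 1/2 + j))
      = Real.Gamma y / ((Real.Gamma y * y ^ (1/2 : ℝ)) * ∏ j ∈ Finset.range n, (y + 1/2 + j)) := by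
        field_simp
    _ ≤ Real.Gamma y / (Real.Gamma (y + 1/2) * ∏ j ∈ Finset.range n, (y + 1/2 + j)) := by
        gcongr
        exact half_upper hy

lemma ratio_upper (n : ℕ) {y : ℝ} (hy : 0 < y) :
    Real.Gamma y / Real.Gamma (y + ((n:ℝ) + 1/2)) ≤
      (y + 1/2) ^ (1/2 : ℝ) / (y * ∏ j ∈ Finset.range n, (y + 1/2 + j)) := by
  have hP := prod_pos' n hy
  have hG : 0 < Real.Gamma y := Real.Gamma_pos_of_pos hy
  have hc : (0:ℝ) < y + 1/2 := by linarith
  have hcr : 0 < (y + 1/2) ^ (1/2 : ℝ) := Real.rpow_pos_of_pos hc _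
  have hcrn : 0 < (y + 1/2) ^ (-(1/2) : ℝ) := Real.rpow_pos_of_pos hc _
  rw [gamma_split n hy]
  calc Real.Gamma y / (Real.Gamma (y + 1/2) * ∏ j ∈ Finset.range n, (y + 1/2 + j))
      ≤ Real.Gamma y / ((Real.Gamma y * y * (y + 1/2) ^ (-(1/2) : ℝ)) * ∏ j ∈ Finset.range n, (y + 1/2 + j)) := by
        gcongr
        exact half_lower hy
    _ = (y + 1/2) ^ (1/2 : ℝ) / (y * ∏ j ∈ Finset.range n, (y + 1/2 + j)) := by
        rw [Real.rpow_neg hc.le]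
        have h1 : (y + 1/2) ^ (1/2 : ℝ) ≠ 0 := hcr.ne'
        field_simp

lemma tendsto_factor (c : ℝ) : Tendsto (fun y : ℝ => y / (y + c)) atTop (𝓝 1) := by
  have h0 : Tendsto (fun y : ℝ => c / (y + c)) atTop (𝓝 0) :=
    Tendsto.div_atTop tendsto_const_nhds (tendsto_atTop_add_const_right _ c tendsto_id)
  have h1 : Tendsto (fun y : ℝ => 1 - c / (y + c)) atTop (𝓝 1) := by
    simpa using tendsto_const_nhds.sub h0
  refine h1.congr' ?_
  filter_upwards [eventually_gt_atTop (-c)] with y hy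
  have : y + c ≠ 0 := by linarith
  field_simp; ring

lemma tendsto_ell (n : ℕ) :
    Tendsto (fun y : ℝ => ∏ j ∈ Finset.range n, (y / (y + (1/2 + j)))) atTop (𝓝 1) := by
  have := tendsto_finset_prod (Finset.range n)
    (fun j _ => tendsto_factor (1/2 + j))
  simpa using this

lemma tendsto_corr : Tendsto (fun y : ℝ => ((y + 1/2) / y) ^ (1/2 : ℝ)) atTop (𝓝 1) := by
  have h0 : Tendsto (fun y : ℝ => (y + 1/2) / y) atTop (𝓝 1) := by
    have h1 : Tendsto (fun y : ℝ => 1 + (1/2) / y) atTop (𝓝 1) := by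
      have hz : Tendsto (fun y : ℝ => (1/2 : ℝ) / y) atTop (𝓝 0) :=
        Tendsto.div_atTop (tendsto_const_nhds : Tendsto (fun _ : ℝ => (1/2:ℝ)) atTop (𝓝 (1/2)))
          tendsto_id
      simpa using (tendsto_const_nhds : Tendsto (fun _ : ℝ => (1:ℝ)) atTop (𝓝 1)).add hz
    refine h1.congr' ?_
    filter_upwards [eventually_gt_atTop (0:ℝ)] with y hy
    rw [add_div, div_self hy.ne']
  have hc : ContinuousAt (fun t : ℝ => t ^ (1/2 : ℝ)) 1 :=
    Real.continuousAt_rpow_const 1 _ (Or.inl one_ne_zero)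
  have := hc.tendsto.comp h0
  simpa [Function.comp_def] using this

lemma tendsto_aux (n : ℕ) :
    Tendsto (fun y : ℝ => y ^ ((n:ℝ) + 1/2) * (Real.Gamma y / Real.Gamma (y + ((n:ℝ) + 1/2))))
      atTop (𝓝 1) := by
  have hl := tendsto_ell n
  have hu : Tendsto (fun y : ℝ =>
      ((y + 1/2) / y) ^ (1/2 : ℝ) * ∏ j ∈ Finset.range n, (y / (y + (1/2 + j)))) atTop (𝓝 1) := by
    simpa using tendsto_corr.mul (tendsto_ell n)
  refine tendsto_of_tendsto_of_tendsto_of_le_of_le' hl hu ?_ ?_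
  · filter_upwards [eventually_gt_atTop (0:ℝ)] with y hy
    have hP := prod_pos' n hy
    have hyr : 0 < y ^ (1/2 : ℝ) := Real.rpow_pos_of_pos hy _
    have hsplit : y ^ ((n:ℝ) + 1/2) = y ^ (n : ℕ) * y ^ (1/2 : ℝ) := by
      rw [← Real.rpow_natCast y n, ← Real.rpow_add hy]
    have hprod : ∏ j ∈ Finset.range n, (y / (y + (1/2 + j)))
        = y ^ (n:ℕ) / ∏ j ∈ Finset.range n, (y + 1/2 + j) := by
      rw [Finset.prod_div_distrib, Finset.prod_const, Finset.card_range]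
      congr 1
      exact Finset.prod_congr rfl fun j _ => by ring
    calc ∏ j ∈ Finset.range n, (y / (y + (1/2 + j)))
        = y ^ ((n:ℝ) + 1/2) * (1 / (y ^ (1/2 : ℝ) * ∏ j ∈ Finset.range n, (y + 1/2 + j))) := by
          rw [hprod, hsplit]; field_simp
      _ ≤ y ^ ((n:ℝ) + 1/2) * (Real.Gamma y / Real.Gamma (y + ((n:ℝ) + 1/2))) := by
          have := ratio_lower n hy
          have hpow : (0:ℝ) ≤ y ^ ((n:ℝ) + 1/2) := (Real.rpow_pos_of_pos hy _).le
          exact mul_le_mul_of_nonneg_left this hpow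
  · filter_upwards [eventually_gt_atTop (0:ℝ)] with y hy
    have hP := prod_pos' n hy
    have hyr : 0 < y ^ (1/2 : ℝ) := Real.rpow_pos_of_pos hy _
    have hc : (0:ℝ) < y + 1/2 := by linarith
    have hcr : 0 < (y + 1/2) ^ (1/2 : ℝ) := Real.rpow_pos_of_pos hc _
    have hsplit : y ^ ((n:ℝ) + 1/2) = y ^ (n : ℕ) * y ^ (1/2 : ℝ) := by
      rw [← Real.rpow_natCast y n, ← Real.rpow_add hy]
    have hprod : ∏ j ∈ Finset.range n, (y / (y + (1/2 + j)))
        = y ^ (n:ℕ) / ∏ j ∈ Finset.range n, (y + 1/2 + j) := by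
      rw [Finset.prod_div_distrib, Finset.prod_const, Finset.card_range]
      congr 1
      exact Finset.prod_congr rfl fun j _ => by ring
    have hA : y ^ (1/2 : ℝ) * y ^ (1/2 : ℝ) = y := by
      rw [← Real.rpow_add hy]; norm_num
    calc y ^ ((n:ℝ) + 1/2) * (Real.Gamma y / Real.Gamma (y + ((n:ℝ) + 1/2)))
        ≤ y ^ ((n:ℝ) + 1/2) *
            ((y + 1/2) ^ (1/2 : ℝ) / (y * ∏ j ∈ Finset.range n, (y + 1/2 + j))) := by
          exact mul_le_mul_of_nonneg_left (ratio_upper n hy) (Real.rpow_pos_of_pos hy _).le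
      _ = ((y + 1/2) / y) ^ (1/2 : ℝ) * ∏ j ∈ Finset.range n, (y / (y + (1/2 + j))) := by
          rw [hprod, hsplit, Real.div_rpow hc.le hy.le]
          set A := y ^ (1/2 : ℝ) with hAdef
          set B := (y + 1/2) ^ (1/2 : ℝ) with hBdef
          set Q := ∏ j ∈ Finset.range n, (y + 1/2 + j) with hQdef
          field_simp
          linear_combination hA

/-- The Riemann zeta function at a real argument, `ζ(x) = ∑_{k≥1} k^{-x}`. -/
noncomputable def zetaReal (x : ℝ) : ℝ := ∑' k : ℕ+, (1 : ℝ) / (k : ℝ) ^ x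

/-- The series asymptotic used in the proof of Theorem 2: as `L → ∞`,
`(2L)^{n+1/2} ∑_{k≥1} Γ(2Lk-n+1)/Γ(2Lk+3/2) → ζ(n+1/2)`. -/
theorem gamma_ratio_series_asymptotics
    (n : ℕ) (hn : 2 ≤ n) :
    Filter.Tendsto
      (fun L : ℝ => (2 * L) ^ ((n : ℝ) + 1 / 2) *
        ∑' k : ℕ+, Real.Gamma (2 * L * k - n + 1) / Real.Gamma (2 * L * k + 3 / 2))
      Filter.atTop (nhds (zetaReal ((n : ℝ) + 1 / 2))) := by
  have hn1 : (1:ℝ) < (n:ℝ) := by exact_mod_cast lt_of_lt_of_le one_lt_two hn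
  have hn2 : (2:ℝ) ≤ (n:ℝ) := by exact_mod_cast hn
  simp_rw [← tsum_mul_left]
  have hzeta : zetaReal ((n:ℝ) + 1/2) = ∑' k : ℕ+, (1:ℝ) / (k:ℝ) ^ ((n:ℝ) + 1/2) := rfl
  rw [hzeta]
  apply tendsto_tsum_of_dominated_convergence
    (bound := fun k : ℕ+ => 2 ^ (n+1) * (k:ℝ) ^ (-((n:ℝ) + 1/2)))
  · -- summability
    have hs : Summable (fun m : ℕ => (m:ℝ) ^ (-((n:ℝ) + 1/2))) :=
      Real.summable_nat_rpow.2 (by linarith)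
    exact (hs.comp_injective PNat.coe_injective).mul_left _
  · -- pointwise convergence
    intro k
    set kr : ℝ := (k : ℝ) with hkr
    have hk0 : 0 < kr := by positivity
    have hk1 : (1:ℝ) ≤ kr := by
      rw [hkr]; have := k.one_le; exact_mod_cast this
    have hy : Tendsto (fun L : ℝ => 2 * L * kr - n + 1) atTop atTop := by
      have h1 : Tendsto (fun L : ℝ => (2 * kr) * L + (1 - (n:ℝ))) atTop atTop :=
        tendsto_atTop_add_const_right _ _
          ((tendsto_id (α := ℝ)).const_mul_atTop (by positivity))
      exact h1.congr (fun L => by ring)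
    have h1 : Tendsto (fun L : ℝ =>
        (2 * L * kr - n + 1) ^ ((n:ℝ) + 1/2) *
          (Real.Gamma (2 * L * kr - n + 1) /
            Real.Gamma ((2 * L * kr - n + 1) + ((n:ℝ) + 1/2)))) atTop (𝓝 1) :=
      (tendsto_aux n).comp hy
    have h2 : Tendsto (fun L : ℝ => 2 * L / (2 * L * kr - n + 1)) atTop (𝓝 (1 / kr)) := by
      have hden : Tendsto (fun L : ℝ => 2 * kr - ((n:ℝ) - 1) / L) atTop (𝓝 (2 * kr)) := by
        have hz : Tendsto (fun L : ℝ => ((n:ℝ) - 1) / L) atTop (𝓝 0) :=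
          Tendsto.div_atTop tendsto_const_nhds tendsto_id
        simpa using (tendsto_const_nhds :
          Tendsto (fun _ : ℝ => 2 * kr) atTop (𝓝 (2 * kr))).sub hz
      have hq : Tendsto (fun L : ℝ => 2 / (2 * kr - ((n:ℝ) - 1) / L)) atTop (𝓝 (2 / (2 * kr))) :=
        Tendsto.div tendsto_const_nhds hden (by positivity)
      have heq : (2:ℝ) / (2 * kr) = 1 / kr := by field_simp
      rw [heq] at hq
      refine hq.congr' ?_
      filter_upwards [eventually_gt_atTop ((n:ℝ))] with L hL
      have hL0 : 0 < L := by linarith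
      have hd1 : 2 * kr - ((n:ℝ) - 1) / L ≠ 0 := by
        have : ((n:ℝ) - 1) / L < 1 := by
          rw [div_lt_one hL0]; linarith
        nlinarith
      have hd2 : 2 * L * kr - n + 1 ≠ 0 := by nlinarith
      rw [div_eq_div_iff hd1 hd2]
      field_simp
      ring
    have h3 : Tendsto (fun L : ℝ => (2 * L / (2 * L * kr - n + 1)) ^ ((n:ℝ) + 1/2))
        atTop (𝓝 ((1 / kr) ^ ((n:ℝ) + 1/2))) :=
      ((Real.continuousAt_rpow_const (1/kr) _ (Or.inl (by positivity))).tendsto).comp h2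
    have hlim : Tendsto (fun L : ℝ =>
        ((2 * L * kr - n + 1) ^ ((n:ℝ) + 1/2) *
          (Real.Gamma (2 * L * kr - n + 1) /
            Real.Gamma ((2 * L * kr - n + 1) + ((n:ℝ) + 1/2)))) *
        (2 * L / (2 * L * kr - n + 1)) ^ ((n:ℝ) + 1/2)) atTop (𝓝 ((1/kr) ^ ((n:ℝ) + 1/2))) := by
      simpa using h1.mul h3
    have hval : (1/kr) ^ ((n:ℝ) + 1/2) = 1 / kr ^ ((n:ℝ) + 1/2) := by
      rw [one_div, Real.inv_rpow hk0.le]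
      exact (one_div _).symm
    rw [hval] at hlim
    refine hlim.congr' ?_
    filter_upwards [eventually_gt_atTop ((n:ℝ))] with L hL
    have hL0 : 0 < L := by linarith
    have hx : 0 < 2 * L * kr - n + 1 := by nlinarith
    have harg : Real.Gamma (2 * L * kr + 3/2)
        = Real.Gamma ((2 * L * kr - n + 1) + ((n:ℝ) + 1/2)) := by
      congr 1; ring
    have hdr : (2 * L / (2 * L * kr - n + 1)) ^ ((n:ℝ) + 1/2)
        = (2 * L) ^ ((n:ℝ) + 1/2) / (2 * L * kr - n + 1) ^ ((n:ℝ) + 1/2) :=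
      Real.div_rpow (by positivity) hx.le _
    have hxp : (0:ℝ) < (2 * L * kr - n + 1) ^ ((n:ℝ) + 1/2) := Real.rpow_pos_of_pos hx _
    rw [harg, hdr]
    field_simp
  · -- uniform bound
    filter_upwards [eventually_gt_atTop ((n:ℝ))] with L hL
    intro k
    set kr : ℝ := (k : ℝ) with hkr
    have hk0 : 0 < kr := by positivity
    have hk1 : (1:ℝ) ≤ kr := by
      rw [hkr]; have := k.one_le; exact_mod_cast this
    have hL0 : 0 < L := by linarith
    set x : ℝ := 2 * L * kr - n + 1 with hxdef
    have hx1 : L * kr ≤ x := by nlinarith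
    have hx0 : 0 < x := lt_of_lt_of_le (by positivity) hx1
    have hx2 : x + 1/2 ≤ 2 * L * kr := by
      rw [hxdef]; linarith
    have hP := prod_pos' n hx0
    have hGx : 0 < Real.Gamma x := Real.Gamma_pos_of_pos hx0
    have hGxa : 0 < Real.Gamma (x + ((n:ℝ) + 1/2)) := Real.Gamma_pos_of_pos (by positivity)
    have harg : Real.Gamma (2 * L * kr + 3/2) = Real.Gamma (x + ((n:ℝ) + 1/2)) := by
      congr 1; rw [hxdef]; ring
    have hnorm : ‖(2 * L) ^ ((n:ℝ) + 1/2) *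
        (Real.Gamma (2 * L * kr - n + 1) / Real.Gamma (2 * L * kr + 3/2))‖
        = (2 * L) ^ ((n:ℝ) + 1/2) * (Real.Gamma x / Real.Gamma (x + ((n:ℝ) + 1/2))) := by
      rw [← hxdef, harg, Real.norm_eq_abs, abs_of_nonneg (by positivity)]
    rw [hnorm]
    have hpow0 : (0:ℝ) ≤ (2 * L) ^ ((n:ℝ) + 1/2) := (Real.rpow_pos_of_pos (by positivity) _).le
    calc (2 * L) ^ ((n:ℝ) + 1/2) * (Real.Gamma x / Real.Gamma (x + ((n:ℝ) + 1/2)))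
        ≤ (2 * L) ^ ((n:ℝ) + 1/2) *
            ((x + 1/2) ^ (1/2 : ℝ) / (x * ∏ j ∈ Finset.range n, (x + 1/2 + j))) :=
          mul_le_mul_of_nonneg_left (ratio_upper n hx0) hpow0
      _ ≤ (2 * L) ^ ((n:ℝ) + 1/2) *
            ((2 * L * kr) ^ (1/2 : ℝ) / ((L * kr) * (L * kr) ^ n)) := by
          have hnum : (x + 1/2) ^ (1/2 : ℝ) ≤ (2 * L * kr) ^ (1/2 : ℝ) :=
            Real.rpow_le_rpow (by positivity) hx2 (by norm_num)
          have hprod : (L * kr) ^ n ≤ ∏ j ∈ Finset.range n, (x + 1/2 + j) := by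
            calc (L * kr) ^ n = ∏ _j ∈ Finset.range n, (L * kr) := by
                  rw [Finset.prod_const, Finset.card_range]
              _ ≤ ∏ j ∈ Finset.range n, (x + 1/2 + j) :=
                  Finset.prod_le_prod (fun j _ => by positivity)
                    (fun j _ => by
                      have hj : (0:ℝ) ≤ (j:ℝ) := Nat.cast_nonneg j
                      linarith)
          have hden : (L * kr) * (L * kr) ^ n ≤ x * ∏ j ∈ Finset.range n, (x + 1/2 + j) :=
            mul_le_mul hx1 hprod (by positivity) hx0.le
          exact mul_le_mul_of_nonneg_left
            (div_le_div₀ (by positivity) hnum (by positivity) hden) hpow0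
      _ = 2 ^ (n+1) * kr ^ (-((n:ℝ) + 1/2)) := by
          have e0 : (2 * L * kr) ^ (1/2 : ℝ) = (2 * L) ^ (1/2 : ℝ) * kr ^ (1/2 : ℝ) :=
            Real.mul_rpow (by positivity) hk0.le
          have e1 : (2 * L) ^ ((n:ℝ) + 1/2) * (2 * L) ^ (1/2 : ℝ) = (2 * L) ^ (n+1 : ℕ) := by
            rw [← Real.rpow_add (by positivity), ← Real.rpow_natCast (2 * L) (n+1)]
            congr 1
            push_cast
            ring
          have e2 : kr ^ (1/2 : ℝ) / kr ^ (n+1 : ℕ) = kr ^ (-((n:ℝ) + 1/2)) := by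
            rw [← Real.rpow_natCast kr (n+1), ← Real.rpow_sub hk0]
            congr 1
            push_cast
            ring
          have e3 : (L * kr) * (L * kr) ^ n = (L * kr) ^ (n+1 : ℕ) := by ring
          have e4 : ((L : ℝ) * kr) ^ (n+1 : ℕ) = L ^ (n+1:ℕ) * kr ^ (n+1:ℕ) := mul_pow _ _ _
          have e5 : ((2:ℝ) * L) ^ (n+1 : ℕ) = 2 ^ (n+1:ℕ) * L ^ (n+1:ℕ) := mul_pow _ _ _
          rw [e0, e3, e4]
          have hLp : (0:ℝ) < L ^ (n+1:ℕ) := by positivity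
          have hkp : (0:ℝ) < kr ^ (n+1:ℕ) := by positivity
          calc (2 * L) ^ ((n:ℝ) + 1/2) *
                ((2 * L) ^ (1/2 : ℝ) * kr ^ (1/2 : ℝ) / (L ^ (n+1:ℕ) * kr ^ (n+1:ℕ)))
              = ((2 * L) ^ ((n:ℝ) + 1/2) * (2 * L) ^ (1/2 : ℝ)) *
                  (kr ^ (1/2 : ℝ) / kr ^ (n+1:ℕ)) / L ^ (n+1:ℕ) := by
                field_simp
            _ = (2 * L) ^ (n+1:ℕ) * kr ^ (-((n:ℝ) + 1/2)) / L ^ (n+1:ℕ) := by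
                rw [e1, e2]
            _ = 2 ^ (n+1) * kr ^ (-((n:ℝ) + 1/2)) := by
                rw [e5]
                field_simp
end

section
/- Let n ≥ 2 be an integer and fix 0 < r < 1. For s ∈ [(1−r²)/(1+r²), 1), let A(s) = ∫_0^{α(s,r)} (2cos θ − 2cos α(s,r))^{n−2} (s + 1/s − 2cos θ) dθ. Then lim_{s→1⁻} A(s)/(1−s)^{n−1/2} = ((n−2)! √π/(4 Γ(n+1/2))) · (2r²)^{n−1/2}. -/
open Real MeasureTheory Filter Set intervalIntegral Topology

/-! ### Auxiliary integral computations (Wallis-type) -/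

private lemma hasDerivAt_aux (m : ℕ) (u : ℝ) :
    HasDerivAt (fun u : ℝ => u * (1 - u ^ 2) ^ (m + 1))
      ((1 - u ^ 2) ^ (m + 1) - 2 * (m + 1) * (u ^ 2 * (1 - u ^ 2) ^ m)) u := by
  have h0 : HasDerivAt (fun u : ℝ => 1 - u ^ 2) (-(2 * u)) u := by
    simpa using ((hasDerivAt_pow 2 u).const_sub 1)
  have h1 := h0.fun_pow (m + 1)
  have h2 := (hasDerivAt_id u).fun_mul h1
  refine h2.congr_deriv ?_
  simp only [Nat.add_sub_cancel, id_eq]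
  push_cast
  ring

private lemma integral_one_sub_sq_pow (m : ℕ) :
    ∫ u in (0:ℝ)..1, (1 - u ^ 2) ^ m
      = Real.sqrt Real.pi * m.factorial / (2 * Real.Gamma (m + 3 / 2)) := by
  induction m with
  | zero =>
      have hΓ : Real.Gamma ((0:ℕ) + 3 / 2) = Real.sqrt Real.pi / 2 := by
        norm_num
        rw [show (3:ℝ)/2 = 1/2 + 1 by norm_num, Real.Gamma_add_one (by norm_num),
          Real.Gamma_one_half_eq]
        ring
      rw [hΓ]
      have : Real.sqrt Real.pi ≠ 0 := by positivity
      simp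
      field_simp
  | succ m ih =>
      have hint : ∀ k : ℕ, IntervalIntegrable (fun u : ℝ => (1 - u ^ 2) ^ k) volume 0 1 := by
        intro k
        exact (by continuity : Continuous fun u : ℝ => (1 - u ^ 2) ^ k).intervalIntegrable 0 1
      have hftc : ∫ u in (0:ℝ)..1,
          ((1 - u ^ 2) ^ (m + 1) - 2 * (m + 1) * (u ^ 2 * (1 - u ^ 2) ^ m)) = 0 := by
        rw [integral_eq_sub_of_hasDerivAt (fun u _ => hasDerivAt_aux m u)]
        · norm_num
        · exact (by continuity : Continuous fun u : ℝ =>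
            (1 - u ^ 2) ^ (m + 1) - 2 * (m + 1) * (u ^ 2 * (1 - u ^ 2) ^ m)).intervalIntegrable 0 1
      have hcongr : ∫ u in (0:ℝ)..1,
          ((1 - u ^ 2) ^ (m + 1) - 2 * (m + 1) * (u ^ 2 * (1 - u ^ 2) ^ m))
          = ∫ u in (0:ℝ)..1,
          ((2 * m + 3) * (1 - u ^ 2) ^ (m + 1) - 2 * (m + 1) * (1 - u ^ 2) ^ m) := by
        apply intervalIntegral.integral_congr
        intro u _
        ring
      have hsplit : ∫ u in (0:ℝ)..1,
          ((2 * (m:ℝ) + 3) * (1 - u ^ 2) ^ (m + 1) - 2 * ((m:ℝ) + 1) * (1 - u ^ 2) ^ m)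
          = (2 * (m:ℝ) + 3) * (∫ u in (0:ℝ)..1, (1 - u ^ 2) ^ (m + 1))
            - 2 * ((m:ℝ) + 1) * ∫ u in (0:ℝ)..1, (1 - u ^ 2) ^ m := by
        rw [intervalIntegral.integral_sub ((hint (m+1)).const_mul _) ((hint m).const_mul _),
          intervalIntegral.integral_const_mul, intervalIntegral.integral_const_mul]
      have key : (2 * (m:ℝ) + 3) * (∫ u in (0:ℝ)..1, (1 - u ^ 2) ^ (m + 1))
          = 2 * ((m:ℝ) + 1) * ∫ u in (0:ℝ)..1, (1 - u ^ 2) ^ m := by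
        have := hftc
        rw [hcongr, hsplit] at this
        linarith
      set G := Real.Gamma ((m:ℝ) + 3 / 2) with hG
      have hΓpos : 0 < G := Real.Gamma_pos_of_pos (by positivity)
      have hΓrec : Real.Gamma (((m+1:ℕ):ℝ) + 3 / 2) = ((m:ℝ) + 3/2) * G := by
        push_cast
        rw [show ((m:ℝ) + 1 + 3 / 2) = ((m:ℝ) + 3/2) + 1 by ring,
          Real.Gamma_add_one (by positivity), hG]
      rw [ih] at key
      rw [hΓrec, eq_div_iff (by positivity)]
      push_cast [Nat.factorial_succ]
      field_simp at key
      linear_combination key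

private lemma integral_sq_mul_one_sub_sq_pow (m : ℕ) :
    ∫ u in (0:ℝ)..1, u ^ 2 * (1 - u ^ 2) ^ m
      = Real.sqrt Real.pi * m.factorial / (4 * Real.Gamma (m + 5 / 2)) := by
  have hint : ∀ k : ℕ, IntervalIntegrable (fun u : ℝ => (1 - u ^ 2) ^ k) volume 0 1 := fun k =>
    (by continuity : Continuous fun u : ℝ => (1 - u ^ 2) ^ k).intervalIntegrable 0 1
  have h1 : ∫ u in (0:ℝ)..1, u ^ 2 * (1 - u ^ 2) ^ m
      = (∫ u in (0:ℝ)..1, (1 - u ^ 2) ^ m) - ∫ u in (0:ℝ)..1, (1 - u ^ 2) ^ (m + 1) := by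
    rw [← intervalIntegral.integral_sub (hint m) (hint (m+1))]
    apply intervalIntegral.integral_congr
    intro u _; ring
  rw [h1, integral_one_sub_sq_pow, integral_one_sub_sq_pow]
  set G := Real.Gamma ((m:ℝ) + 3 / 2) with hG
  have hΓpos : 0 < G := Real.Gamma_pos_of_pos (by positivity)
  have hΓrec : Real.Gamma (((m+1:ℕ):ℝ) + 3 / 2) = ((m:ℝ) + 3/2) * G := by
    push_cast
    rw [show ((m:ℝ) + 1 + 3 / 2) = ((m:ℝ) + 3/2) + 1 by ring,
      Real.Gamma_add_one (by positivity), hG]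
  have hΓrec2 : Real.Gamma ((m:ℝ) + 5 / 2) = ((m:ℝ) + 3/2) * G := by
    rw [show ((m:ℝ) + 5 / 2) = ((m:ℝ) + 3/2) + 1 by ring,
      Real.Gamma_add_one (by positivity), hG]
  rw [hΓrec, hΓrec2]
  push_cast [Nat.factorial_succ]
  field_simp
  ring

/-! ### Trigonometric limits and bounds -/

private lemma two_sub_two_cos (x : ℝ) : 2 - 2 * Real.cos x = 4 * Real.sin (x / 2) ^ 2 := by
  have := Real.sin_sq_eq_half_sub (x / 2)
  rw [show 2 * (x / 2) = x by ring] at this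
  linarith

private lemma tendsto_sin_div_self : Tendsto (fun x : ℝ => Real.sin x / x) (𝓝[≠] 0) (𝓝 1) := by
  have h := (Real.hasDerivAt_sin 0)
  rw [Real.cos_zero] at h
  have := hasDerivAt_iff_tendsto_slope.mp h
  apply this.congr
  intro x
  simp [slope_def_field, Real.sin_zero]

private lemma tendsto_one_sub_cos_div_sq :
    Tendsto (fun x : ℝ => (2 - 2 * Real.cos x) / x ^ 2) (𝓝[≠] 0) (𝓝 1) := by
  have hhalf : Tendsto (fun x : ℝ => x / 2) (𝓝[≠] (0:ℝ)) (𝓝[≠] (0:ℝ)) := by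
    rw [tendsto_nhdsWithin_iff]
    constructor
    · have : Tendsto (fun x : ℝ => x / 2) (𝓝 (0:ℝ)) (𝓝 ((0:ℝ)/2)) :=
        (continuous_id.div_const 2).tendsto 0
      simpa using this.mono_left nhdsWithin_le_nhds
    · filter_upwards [self_mem_nhdsWithin] with x hx
      simpa using div_ne_zero hx two_ne_zero
  have h2 : Tendsto (fun x : ℝ => (Real.sin (x / 2) / (x / 2)) ^ 2) (𝓝[≠] (0:ℝ)) (𝓝 1) := by
    simpa using (tendsto_sin_div_self.comp hhalf).pow 2
  apply h2.congr'
  filter_upwards [self_mem_nhdsWithin] with x hx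
  rw [two_sub_two_cos, div_pow]
  rw [show Real.sin (x/2)^2 / (x/2)^2 = 4 * Real.sin (x/2)^2 / x^2 by
    rw [div_pow]; ring_nf]

private lemma tendsto_sq_div_one_sub_cos :
    Tendsto (fun x : ℝ => x ^ 2 / (2 - 2 * Real.cos x)) (𝓝[≠] 0) (𝓝 1) := by
  have := tendsto_one_sub_cos_div_sq.inv₀ one_ne_zero
  simp only [inv_div, inv_one] at this
  exact this

private lemma sq_le_two_mul_one_sub_cos {x : ℝ} (hx0 : 0 ≤ x) (hx : x ≤ Real.pi / 2) :
    x ^ 2 ≤ 2 * (2 - 2 * Real.cos x) := by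
  rcases eq_or_lt_of_le hx0 with h | h
  · simp [← h]
  · have h1 : 0 < x / 2 := by linarith
    have h2 : x / 2 ≤ 1 := by
      have := Real.pi_le_four
      linarith
    have h3 := Real.sin_gt_sub_cube h1
    have h2' : (x/2)^2 ≤ 1 := by nlinarith
    have h4 : (3:ℝ)/4 * (x/2) ≤ Real.sin (x/2) := by
      nlinarith [mul_le_mul_of_nonneg_left h2' h1.le]
    have h5 : (0:ℝ) ≤ Real.sin (x/2) := by nlinarith
    rw [two_sub_two_cos]
    nlinarith [sq_nonneg (Real.sin (x/2) - 3/4*(x/2))]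

/-- The inner angular integral `A(s)` of step 4, Section 3. -/
noncomputable def innerIntegral (n : ℕ) (r s : ℝ) : ℝ :=
  ∫ θ in (0 : ℝ)..alphaAngle r s,
    (2 * Real.cos θ - 2 * Real.cos (alphaAngle r s)) ^ (n - 2) *
      (s + 1 / s - 2 * Real.cos θ)

set_option maxHeartbeats 2000000 in
/-- Step 4 of Section 3: as `s → 1⁻`,
`A(s)/(1-s)^{n-1/2} → ((n-2)!√π/(4Γ(n+1/2))) (2r²)^{n-1/2}`. -/
theorem inner_integral_asymptotics
    (n : ℕ) (hn : 2 ≤ n) (r : ℝ) (hr0 : 0 < r) (hr1 : r < 1) :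
    Filter.Tendsto (fun s : ℝ => innerIntegral n r s / (1 - s) ^ ((n : ℝ) - 1 / 2))
      (nhdsWithin 1 (Set.Iio 1))
      (nhds (Nat.factorial (n - 2) * Real.sqrt Real.pi /
          (4 * Real.Gamma ((n : ℝ) + 1 / 2)) *
        (2 * r ^ 2) ^ ((n : ℝ) - 1 / 2))) := by
  have hr2 : (0:ℝ) < 1 - r ^ 2 := by nlinarith
  have hr2' : (0:ℝ) < 1 + r ^ 2 := by positivity
  have hρ : (0:ℝ) < 2 * r ^ 2 := by positivity
  set k : ℕ := n - 2 with hk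
  set s₀ : ℝ := max ((1 - r ^ 2) / (1 + r ^ 2)) (1 / 2) with hs₀def
  have hs₀1 : s₀ < 1 := by
    apply max_lt
    · rw [div_lt_one hr2']; nlinarith
    · norm_num
  have hmem : Ioo s₀ 1 ∈ 𝓝[<] (1 : ℝ) := Ioo_mem_nhdsLT_of_mem ⟨hs₀1, le_rfl⟩
  -- basic pointwise facts on `Ioo s₀ 1`
  have hs_half : ∀ s ∈ Ioo s₀ 1, (1:ℝ)/2 < s := fun s hs =>
    lt_of_le_of_lt (le_max_right _ _) hs.1
  have hs_pos : ∀ s ∈ Ioo s₀ 1, (0:ℝ) < s := fun s hs => by linarith [hs_half s hs]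
  have hsr : ∀ s ∈ Ioo s₀ 1, 1 - r ^ 2 < (1 + r ^ 2) * s := by
    intro s hs
    have h1 : (1 - r ^ 2) / (1 + r ^ 2) < s := lt_of_le_of_lt (le_max_left _ _) hs.1
    rw [div_lt_iff₀ hr2'] at h1
    linarith
  set gg : ℝ → ℝ := fun s => (1 + r ^ 2) - (1 - r ^ 2) / s with hggdef
  have hgg_pos : ∀ s ∈ Ioo s₀ 1, 0 < gg s := by
    intro s hs
    have h1 := hsr s hs
    have hsp := hs_pos s hs
    have : (1 - r ^ 2) / s < 1 + r ^ 2 := by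
      rw [div_lt_iff₀ hsp]; nlinarith
    simp only [hggdef]
    linarith
  have hgg_le : ∀ s ∈ Ioo s₀ 1, gg s ≤ 2 * r ^ 2 := by
    intro s hs
    have hsp := hs_pos s hs
    have h1 : 1 - r ^ 2 ≤ (1 - r ^ 2) / s := by
      rw [le_div_iff₀ hsp]; nlinarith [hs.2]
    simp only [hggdef]
    nlinarith
  have harg_pos : ∀ s ∈ Ioo s₀ 1, 0 < ((1 + r ^ 2) * s + (1 - r ^ 2) / s) / 2 := by
    intro s hs
    have hsp := hs_pos s hs
    have := div_pos hr2 hsp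
    nlinarith
  have harg_lt : ∀ s ∈ Ioo s₀ 1, ((1 + r ^ 2) * s + (1 - r ^ 2) / s) / 2 < 1 := by
    intro s hs
    have hsp := hs_pos s hs
    have h2 := hsr s hs
    have h3 : (1 - r ^ 2) / s < 2 - (1 + r ^ 2) * s := by
      rw [div_lt_iff₀ hsp]
      have hp : 0 < (1 - s) * ((1 + r ^ 2) * s - (1 - r ^ 2)) :=
        mul_pos (by linarith [hs.2]) (by linarith)
      nlinarith
    linarith
  have hcos : ∀ s ∈ Ioo s₀ 1,
      Real.cos (alphaAngle r s) = ((1 + r ^ 2) * s + (1 - r ^ 2) / s) / 2 := by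
    intro s hs
    exact Real.cos_arccos (by linarith [harg_pos s hs]) (le_of_lt (harg_lt s hs))
  have hkey : ∀ s ∈ Ioo s₀ 1,
      2 - 2 * Real.cos (alphaAngle r s) = (1 - s) * gg s := by
    intro s hs
    have hsp := hs_pos s hs
    rw [hcos s hs]
    simp only [hggdef]
    field_simp
    ring
  have hapos : ∀ s ∈ Ioo s₀ 1, 0 < alphaAngle r s := fun s hs =>
    Real.arccos_pos.2 (harg_lt s hs)
  have hapi2 : ∀ s ∈ Ioo s₀ 1, alphaAngle r s ≤ Real.pi / 2 := fun s hs =>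
    Real.arccos_le_pi_div_two.2 (le_of_lt (harg_pos s hs))
  -- limits
  have htA : Tendsto (alphaAngle r) (𝓝[<] (1:ℝ)) (𝓝 0) := by
    have hconf : ContinuousAt (fun s : ℝ => ((1 + r ^ 2) * s + (1 - r ^ 2) / s) / 2) 1 := by
      apply ContinuousAt.div_const
      exact (continuousAt_const.mul continuousAt_id).add
        (continuousAt_const.div continuousAt_id one_ne_zero)
    have h1 : Tendsto (fun s : ℝ => ((1 + r ^ 2) * s + (1 - r ^ 2) / s) / 2) (𝓝 1) (𝓝 1) := by
      have h := hconf.tendsto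
      rw [show (((1 + r ^ 2) * 1 + (1 - r ^ 2) / 1) / 2 : ℝ) = 1 by norm_num] at h
      exact h
    have h2 := (Real.continuous_arccos.tendsto 1).comp h1
    rw [Real.arccos_one] at h2
    exact h2.mono_left nhdsWithin_le_nhds
  have htA' : Tendsto (alphaAngle r) (𝓝[<] (1:ℝ)) (𝓝[≠] (0:ℝ)) := by
    rw [tendsto_nhdsWithin_iff]
    refine ⟨htA, ?_⟩
    filter_upwards [hmem] with s hs
    exact (hapos s hs).ne'
  have htgg : Tendsto gg (𝓝[<] (1:ℝ)) (𝓝 (2 * r ^ 2)) := by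
    have hconf : ContinuousAt gg 1 := by
      simp only [hggdef]
      exact continuousAt_const.sub (continuousAt_const.div continuousAt_id one_ne_zero)
    have h := hconf.tendsto
    rw [show gg 1 = 2 * r ^ 2 by simp only [hggdef]; norm_num; ring] at h
    exact h.mono_left nhdsWithin_le_nhds
  have htsq : Tendsto (fun s => (alphaAngle r s) ^ 2 / (1 - s)) (𝓝[<] (1:ℝ))
      (𝓝 (2 * r ^ 2)) := by
    have hB := tendsto_sq_div_one_sub_cos.comp htA'
    have h := hB.mul htgg
    rw [one_mul] at h
    apply h.congr'
    filter_upwards [hmem] with s hs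
    have h1s : (0:ℝ) < 1 - s := by linarith [hs.2]
    have hggp := hgg_pos s hs
    simp only [Function.comp]
    rw [hkey s hs]
    field_simp
  have htsqrt : Tendsto (fun s => alphaAngle r s / Real.sqrt (1 - s)) (𝓝[<] (1:ℝ))
      (𝓝 (Real.sqrt (2 * r ^ 2))) := by
    have h := (Real.continuous_sqrt.tendsto (2 * r ^ 2)).comp htsq
    apply h.congr'
    filter_upwards [hmem] with s hs
    simp only [Function.comp]
    rw [Real.sqrt_div (sq_nonneg _), Real.sqrt_sq (hapos s hs).le]
  have htcosu : ∀ u : ℝ, 0 < u → u ≤ 1 →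
      Tendsto (fun s => (2 - 2 * Real.cos (alphaAngle r s * u)) / (1 - s)) (𝓝[<] (1:ℝ))
        (𝓝 (2 * r ^ 2 * u ^ 2)) := by
    intro u hu _
    have hAu : Tendsto (fun s => alphaAngle r s * u) (𝓝[<] (1:ℝ)) (𝓝[≠] (0:ℝ)) := by
      rw [tendsto_nhdsWithin_iff]
      constructor
      · simpa using htA.mul_const u
      · filter_upwards [hmem] with s hs
        exact (mul_pos (hapos s hs) hu).ne'
    have h1 := tendsto_one_sub_cos_div_sq.comp hAu
    have h := (h1.mul htsq).mul_const (u ^ 2)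
    rw [one_mul] at h
    apply h.congr'
    filter_upwards [hmem] with s hs
    have h1s : (0:ℝ) < 1 - s := by linarith [hs.2]
    have ha0 := hapos s hs
    simp only [Function.comp]
    rw [mul_pow]
    field_simp
  -- the rescaled integrand
  set F : ℝ → ℝ → ℝ := fun s u =>
    (alphaAngle r s / Real.sqrt (1 - s)) *
      ((2 * Real.cos (alphaAngle r s * u) - 2 * Real.cos (alphaAngle r s)) / (1 - s)) ^ k *
      ((s + 1 / s - 2 * Real.cos (alphaAngle r s * u)) / (1 - s)) with hFdef
  set Flim : ℝ → ℝ := fun u =>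
    Real.sqrt (2 * r ^ 2) * (2 * r ^ 2 - 2 * r ^ 2 * u ^ 2) ^ k * (2 * r ^ 2 * u ^ 2)
    with hFlimdef
  -- pointwise convergence
  have hptwise : ∀ u ∈ Ioc (0:ℝ) 1, Tendsto (fun s => F s u) (𝓝[<] (1:ℝ)) (𝓝 (Flim u)) := by
    intro u hu
    -- limit of the middle factor
    have hP2 : Tendsto
        (fun s => (2 * Real.cos (alphaAngle r s * u) - 2 * Real.cos (alphaAngle r s)) / (1 - s))
        (𝓝[<] (1:ℝ)) (𝓝 (2 * r ^ 2 - 2 * r ^ 2 * u ^ 2)) := by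
      have h := htgg.sub (htcosu u hu.1 hu.2)
      apply h.congr'
      filter_upwards [hmem] with s hs
      have h1s : (1:ℝ) - s ≠ 0 := by have := hs.2; intro hc; linarith
      have hk2 := hkey s hs
      have : gg s = (2 - 2 * Real.cos (alphaAngle r s)) / (1 - s) := by
        rw [hk2]; field_simp
      rw [this, div_sub_div_same]
      ring_nf
    -- limit of the last factor
    have hP3 : Tendsto
        (fun s => (s + 1 / s - 2 * Real.cos (alphaAngle r s * u)) / (1 - s))
        (𝓝[<] (1:ℝ)) (𝓝 (2 * r ^ 2 * u ^ 2)) := by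
      have h0 : Tendsto (fun s : ℝ => (1 - s) / s) (𝓝[<] (1:ℝ)) (𝓝 0) := by
        have hconf : ContinuousAt (fun s : ℝ => (1 - s) / s) 1 :=
          (continuousAt_const.sub continuousAt_id).div continuousAt_id one_ne_zero
        have h := hconf.tendsto
        rw [show ((1:ℝ) - 1) / 1 = 0 by norm_num] at h
        exact h.mono_left nhdsWithin_le_nhds
      have h := h0.add (htcosu u hu.1 hu.2)
      rw [zero_add] at h
      apply h.congr'
      filter_upwards [hmem] with s hs
      have h1s : (0:ℝ) < 1 - s := by have := hs.2; linarith
      have hsp := hs_pos s hs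
      field_simp
      ring
    have h := (htsqrt.mul (hP2.pow k)).mul hP3
    simpa only [hFdef, hFlimdef] using h
  -- dominated convergence
  have hDCT : Tendsto (fun s => ∫ u in Ioc (0:ℝ) 1, F s u) (𝓝[<] (1:ℝ))
      (𝓝 (∫ u in Ioc (0:ℝ) 1, Flim u)) := by
    apply MeasureTheory.tendsto_integral_filter_of_dominated_convergence
      (bound := fun _ : ℝ => 2 * r * (2 * r ^ 2) ^ k * (1 + 2 * r ^ 2))
    · apply Eventually.of_forall
      intro s
      apply Continuous.aestronglyMeasurable
      simp only [hFdef]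
      fun_prop
    · filter_upwards [hmem] with s hs
      rw [ae_restrict_iff' measurableSet_Ioc]
      apply ae_of_all
      intro u hu
      have h1s : (0:ℝ) < 1 - s := by have := hs.2; linarith
      have hsp := hs_pos s hs
      have hsh := hs_half s hs
      have ha0 := hapos s hs
      have hapi := hapi2 s hs
      have hggp := hgg_pos s hs
      have hggle := hgg_le s hs
      have hk2 := hkey s hs
      have hau0 : 0 ≤ alphaAngle r s * u := mul_nonneg ha0.le hu.1.le
      have haua : alphaAngle r s * u ≤ alphaAngle r s :=
        mul_le_of_le_one_right ha0.le hu.2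
      have hapi' : alphaAngle r s ≤ Real.pi := le_trans hapi (by linarith [Real.pi_pos])
      have hcm : Real.cos (alphaAngle r s) ≤ Real.cos (alphaAngle r s * u) :=
        Real.cos_le_cos_of_nonneg_of_le_pi hau0 hapi' haua
      have hc1 : Real.cos (alphaAngle r s * u) ≤ 1 := Real.cos_le_one _
      have hX0 : 0 ≤ 2 * Real.cos (alphaAngle r s * u) - 2 * Real.cos (alphaAngle r s) := by
        linarith
      have hXle : 2 * Real.cos (alphaAngle r s * u) - 2 * Real.cos (alphaAngle r s)
          ≤ (1 - s) * gg s := by linarith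
      have hP2a : 0 ≤ (2 * Real.cos (alphaAngle r s * u)
          - 2 * Real.cos (alphaAngle r s)) / (1 - s) := div_nonneg hX0 h1s.le
      have hP2b : (2 * Real.cos (alphaAngle r s * u)
          - 2 * Real.cos (alphaAngle r s)) / (1 - s) ≤ 2 * r ^ 2 := by
        rw [div_le_iff₀ h1s]
        nlinarith
      have hs2 : 0 ≤ s + 1 / s - 2 := by
        have hid : s + 1 / s - 2 = (1 - s) ^ 2 / s := by field_simp; ring
        rw [hid]; positivity
      have hY0 : 0 ≤ s + 1 / s - 2 * Real.cos (alphaAngle r s * u) := by linarith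
      have hP3a : 0 ≤ (s + 1 / s - 2 * Real.cos (alphaAngle r s * u)) / (1 - s) :=
        div_nonneg hY0 h1s.le
      have hP3b : (s + 1 / s - 2 * Real.cos (alphaAngle r s * u)) / (1 - s)
          ≤ 1 + 2 * r ^ 2 := by
        rw [div_le_iff₀ h1s]
        have hid : s + 1 / s - 2 = (1 - s) ^ 2 / s := by field_simp; ring
        have hfrac : (1 - s) ^ 2 / s ≤ (1 - s) * 1 := by
          rw [div_le_iff₀ hsp]
          nlinarith
        nlinarith
      have hsq := sq_le_two_mul_one_sub_cos ha0.le hapi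
      have h6 : alphaAngle r s ^ 2 ≤ (2 * r) ^ 2 * (1 - s) := by nlinarith
      have h7 := Real.sqrt_le_sqrt h6
      rw [Real.sqrt_sq ha0.le, Real.sqrt_mul (by positivity), Real.sqrt_sq (by positivity)]
        at h7
      have hP1b : alphaAngle r s / Real.sqrt (1 - s) ≤ 2 * r := by
        rw [div_le_iff₀ (Real.sqrt_pos.2 h1s)]
        exact h7
      have hP1a : 0 ≤ alphaAngle r s / Real.sqrt (1 - s) := by positivity
      simp only [hFdef]
      rw [Real.norm_eq_abs, abs_of_nonneg
        (mul_nonneg (mul_nonneg hP1a (pow_nonneg hP2a k)) hP3a)]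
      exact mul_le_mul
        (mul_le_mul hP1b (pow_le_pow_left₀ hP2a hP2b k) (pow_nonneg hP2a k) (by positivity))
        hP3b hP3a (by positivity)
    · exact integrable_const _
    · rw [ae_restrict_iff' measurableSet_Ioc]
      exact ae_of_all _ hptwise
  -- value of the limit integral
  have hval : ∫ u in Ioc (0:ℝ) 1, Flim u
      = Nat.factorial (n - 2) * Real.sqrt Real.pi / (4 * Real.Gamma ((n : ℝ) + 1 / 2)) *
        (2 * r ^ 2) ^ ((n : ℝ) - 1 / 2) := by
    rw [← intervalIntegral.integral_of_le zero_le_one]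
    have hcongr : ∫ u in (0:ℝ)..1, Flim u
        = ∫ u in (0:ℝ)..1,
            (Real.sqrt (2 * r ^ 2) * (2 * r ^ 2) ^ k * (2 * r ^ 2)) *
              (u ^ 2 * (1 - u ^ 2) ^ k) := by
      apply intervalIntegral.integral_congr
      intro u _
      simp only [hFlimdef]
      rw [show (2 * r ^ 2 - 2 * r ^ 2 * u ^ 2 : ℝ) = 2 * r ^ 2 * (1 - u ^ 2) by ring, mul_pow]
      ring
    rw [hcongr, intervalIntegral.integral_const_mul, integral_sq_mul_one_sub_sq_pow]
    have hΓarg : ((k:ℝ) + 5 / 2) = (n:ℝ) + 1 / 2 := by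
      rw [hk, Nat.cast_sub hn]; push_cast; ring
    rw [hΓarg]
    have hΓpos : 0 < Real.Gamma ((n:ℝ) + 1 / 2) := Real.Gamma_pos_of_pos (by positivity)
    have hpow : (2 * r ^ 2 : ℝ) ^ ((n:ℝ) - 1 / 2)
        = (2 * r ^ 2) ^ (k + 1) * Real.sqrt (2 * r ^ 2) := by
      rw [show (n:ℝ) - 1 / 2 = ((k + 1 : ℕ):ℝ) + 1 / 2 by
        rw [hk]; push_cast [Nat.cast_sub hn]; ring]
      rw [Real.rpow_add hρ, Real.rpow_natCast, ← Real.sqrt_eq_rpow]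
    rw [hpow, ← hk]
    field_simp
    ring
  -- identification of the rescaled quotient with the integral of F
  have hmain : ∀ᶠ s in 𝓝[<] (1:ℝ),
      (∫ u in Ioc (0:ℝ) 1, F s u)
        = innerIntegral n r s / (1 - s) ^ ((n : ℝ) - 1 / 2) := by
    filter_upwards [hmem] with s hs
    have h1s : (0:ℝ) < 1 - s := by have := hs; simp only [mem_Ioo] at this; linarith [this.2]
    have hsp := hs_pos s hs
    have ha0 := hapos s hs
    have hsqpos : 0 < Real.sqrt (1 - s) := Real.sqrt_pos.2 h1s
    have hsub : innerIntegral n r s = alphaAngle r s * ∫ u in (0:ℝ)..1,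
        ((2 * Real.cos (alphaAngle r s * u) - 2 * Real.cos (alphaAngle r s)) ^ (n - 2) *
          (s + 1 / s - 2 * Real.cos (alphaAngle r s * u))) := by
      have h := intervalIntegral.smul_integral_comp_mul_left
        (a := (0:ℝ)) (b := 1)
        (f := fun θ => (2 * Real.cos θ - 2 * Real.cos (alphaAngle r s)) ^ (n - 2) *
          (s + 1 / s - 2 * Real.cos θ)) (alphaAngle r s)
      rw [mul_zero, mul_one] at h
      rw [innerIntegral, ← h, smul_eq_mul]
    have hD : (1 - s) ^ ((n:ℝ) - 1 / 2)
        = Real.sqrt (1 - s) * (1 - s) ^ k * (1 - s) := by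
      rw [show (n:ℝ) - 1 / 2 = 1 / 2 + ((k:ℕ):ℝ) + 1 by
        rw [hk, Nat.cast_sub hn]; push_cast; ring]
      rw [Real.rpow_add h1s, Real.rpow_add h1s, Real.rpow_one, Real.rpow_natCast,
        ← Real.sqrt_eq_rpow]
    have hLHS : (∫ u in Ioc (0:ℝ) 1, F s u)
        = (alphaAngle r s / (Real.sqrt (1 - s) * (1 - s) ^ k * (1 - s))) *
          ∫ u in Ioc (0:ℝ) 1,
            ((2 * Real.cos (alphaAngle r s * u) - 2 * Real.cos (alphaAngle r s)) ^ (n - 2) *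
              (s + 1 / s - 2 * Real.cos (alphaAngle r s * u))) := by
      rw [← MeasureTheory.integral_const_mul]
      congr 1
      funext u
      simp only [hFdef, ← hk]
      rw [div_pow]
      field_simp
    rw [hLHS, hsub, hD, intervalIntegral.integral_of_le zero_le_one]
    ring
  rw [hval] at hDCT
  exact hDCT.congr' hmain
end

section
/- Let n ≥ 2 be an integer and 0 < r < 1. There exists a constant C = C(n,r) > 0 such that for every ε ∈ (0,1) and every real L with 2L ≥ n, ∫_{(1−r²)/(1+r²)}^{1−ε} (s^{2L−n}/(1−s^{2L})) · (∫_0^{α(s,r)} (2cos θ − 2cos α(s,r))^{n−2} (s + 1/s − 2cos θ) dθ) ds ≤ C · (1−ε)^{2L−n}/(1 − (1−ε)^{2L}). -/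
private lemma sOneDivS (s : ℝ) (hs : 0 < s) : (2 : ℝ) ≤ s + 1 / s := by
  have h : s * (1 / s) = 1 := mul_one_div_cancel hs.ne'
  nlinarith [sq_nonneg (s - 1)]

private lemma inner_nonneg (n : ℕ) (r s : ℝ) (hs : 0 < s) :
    0 ≤ ∫ θ in (0 : ℝ)..alphaAngle r s,
      (2 * Real.cos θ - 2 * Real.cos (alphaAngle r s)) ^ (n - 2) *
        (s + 1 / s - 2 * Real.cos θ) := by
  apply intervalIntegral.integral_nonneg (Real.arccos_nonneg _)
  intro θ hθ
  have hcos : Real.cos (alphaAngle r s) ≤ Real.cos θ :=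
    Real.cos_le_cos_of_nonneg_of_le_pi hθ.1 (Real.arccos_le_pi _) hθ.2
  have h1 : 0 ≤ 2 * Real.cos θ - 2 * Real.cos (alphaAngle r s) := by linarith
  have h2 : 0 ≤ s + 1 / s - 2 * Real.cos θ := by
    have := sOneDivS s hs
    have := Real.cos_le_one θ
    linarith
  exact mul_nonneg (pow_nonneg h1 _) h2

private lemma inner_le (n : ℕ) (r s : ℝ) (hs0 : 0 < s) (hs1 : s ≤ 1) :
    (∫ θ in (0 : ℝ)..alphaAngle r s,
      (2 * Real.cos θ - 2 * Real.cos (alphaAngle r s)) ^ (n - 2) *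
        (s + 1 / s - 2 * Real.cos θ))
      ≤ 4 ^ (n - 2) * (3 + 1 / s) * Real.pi := by
  set α := alphaAngle r s with hα
  have hα0 : 0 ≤ α := Real.arccos_nonneg _
  have hαπ : α ≤ Real.pi := Real.arccos_le_pi _
  have hs' : 0 < 1 / s := by positivity
  have hbound : ∀ θ ∈ Set.uIoc (0 : ℝ) α,
      ‖(2 * Real.cos θ - 2 * Real.cos α) ^ (n - 2) * (s + 1 / s - 2 * Real.cos θ)‖
        ≤ 4 ^ (n - 2) * (3 + 1 / s) := by
    intro θ _
    rw [Real.norm_eq_abs, abs_mul, abs_pow]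
    have h1 : |2 * Real.cos θ - 2 * Real.cos α| ≤ 4 := by
      have := Real.cos_le_one θ; have := Real.neg_one_le_cos θ
      have := Real.cos_le_one α; have := Real.neg_one_le_cos α
      rw [abs_le]; constructor <;> linarith
    have h2 : |s + 1 / s - 2 * Real.cos θ| ≤ 3 + 1 / s := by
      have := Real.cos_le_one θ; have := Real.neg_one_le_cos θ
      rw [abs_le]; constructor <;> linarith
    exact mul_le_mul (pow_le_pow_left₀ (abs_nonneg _) h1 _) h2 (abs_nonneg _)
      (by positivity)
  have hnorm := intervalIntegral.norm_integral_le_of_norm_le_const hbound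
  have habs : |α - 0| = α := by rw [sub_zero, abs_of_nonneg hα0]
  calc (∫ θ in (0 : ℝ)..α,
        (2 * Real.cos θ - 2 * Real.cos α) ^ (n - 2) * (s + 1 / s - 2 * Real.cos θ))
      ≤ ‖∫ θ in (0 : ℝ)..α,
        (2 * Real.cos θ - 2 * Real.cos α) ^ (n - 2) * (s + 1 / s - 2 * Real.cos θ)‖ :=
        le_abs_self _
    _ ≤ 4 ^ (n - 2) * (3 + 1 / s) * |α - 0| := hnorm
    _ ≤ 4 ^ (n - 2) * (3 + 1 / s) * Real.pi := by
        rw [habs]; gcongr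

/-- Step 1 of Section 3: the part of `K(L,r)` with `s ≤ 1-ε` is at most
`C (1-ε)^{2L-n}/(1-(1-ε)^{2L})`, hence decays exponentially in `L`. -/
theorem K_tail_estimate
    (n : ℕ) (hn : 2 ≤ n) (r : ℝ) (hr0 : 0 < r) (hr1 : r < 1) :
    ∃ C : ℝ, 0 < C ∧
      ∀ ε ∈ Set.Ioo (0 : ℝ) 1, ∀ L : ℝ, (n : ℝ) ≤ 2 * L →
        (∫ s in ((1 - r ^ 2) / (1 + r ^ 2))..(1 - ε),
            s ^ (2 * L - n) / (1 - s ^ (2 * L)) *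
              ∫ θ in (0 : ℝ)..alphaAngle r s,
                (2 * Real.cos θ - 2 * Real.cos (alphaAngle r s)) ^ (n - 2) *
                  (s + 1 / s - 2 * Real.cos θ))
          ≤ C * (1 - ε) ^ (2 * L - n) / (1 - (1 - ε) ^ (2 * L)) := by
  set a : ℝ := (1 - r ^ 2) / (1 + r ^ 2) with ha
  have ha0 : 0 < a := by
    apply div_pos <;> nlinarith
  have ha1 : a < 1 := by
    rw [div_lt_one (by nlinarith)]; nlinarith
  refine ⟨4 ^ (n - 2) * (3 + 1 / a) * Real.pi, by positivity, ?_⟩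
  set C : ℝ := 4 ^ (n - 2) * (3 + 1 / a) * Real.pi with hC
  have hCpos : 0 < C := by rw [hC]; positivity
  intro ε hε L hL
  obtain ⟨hε0, hε1⟩ := hε
  set b : ℝ := 1 - ε with hb
  have hb0 : 0 < b := by simp [hb]; linarith
  have hb1 : b < 1 := by simp [hb]; linarith
  have h2L : (0 : ℝ) < 2 * L := by
    have : (2 : ℝ) ≤ (n : ℝ) := by exact_mod_cast hn
    linarith
  have hexp : (0 : ℝ) ≤ 2 * L - n := by linarith
  have hbL1 : b ^ (2 * L) < 1 := Real.rpow_lt_one hb0.le hb1 h2L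
  have hDden : 0 < 1 - b ^ (2 * L) := by linarith
  have hD0 : 0 ≤ b ^ (2 * L - n) / (1 - b ^ (2 * L)) :=
    div_nonneg (Real.rpow_nonneg hb0.le _) hDden.le
  rw [mul_div_assoc]
  set D : ℝ := b ^ (2 * L - n) / (1 - b ^ (2 * L)) with hD
  rcases le_or_gt b a with hba | hab
  · -- degenerate case: the integral is ≤ 0
    rw [intervalIntegral.integral_symm b a]
    have hnn : 0 ≤ ∫ s in b..a,
        s ^ (2 * L - n) / (1 - s ^ (2 * L)) *
          ∫ θ in (0 : ℝ)..alphaAngle r s,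
            (2 * Real.cos θ - 2 * Real.cos (alphaAngle r s)) ^ (n - 2) *
              (s + 1 / s - 2 * Real.cos θ) := by
      apply intervalIntegral.integral_nonneg hba
      intro s hs
      have hs0 : 0 < s := lt_of_lt_of_le hb0 hs.1
      have hs1 : s < 1 := lt_of_le_of_lt hs.2 ha1
      have hsd : 0 < 1 - s ^ (2 * L) := by
        have := Real.rpow_lt_one hs0.le hs1 h2L; linarith
      exact mul_nonneg (div_nonneg (Real.rpow_nonneg hs0.le _) hsd.le)
        (inner_nonneg n r s hs0)
    have : 0 ≤ C * D := mul_nonneg hCpos.le hD0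
    linarith
  · -- main case a < b
    have hbound : ∀ s ∈ Set.uIoc a b,
        ‖s ^ (2 * L - n) / (1 - s ^ (2 * L)) *
          ∫ θ in (0 : ℝ)..alphaAngle r s,
            (2 * Real.cos θ - 2 * Real.cos (alphaAngle r s)) ^ (n - 2) *
              (s + 1 / s - 2 * Real.cos θ)‖ ≤ C * D := by
      intro s hs
      rw [Set.uIoc_of_le hab.le] at hs
      have hs0 : 0 < s := lt_trans ha0 hs.1
      have hsb : s ≤ b := hs.2
      have hs1 : s < 1 := lt_of_le_of_lt hsb hb1
      have hsd : 0 < 1 - s ^ (2 * L) := by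
        have := Real.rpow_lt_one hs0.le hs1 h2L; linarith
      have hratio0 : 0 ≤ s ^ (2 * L - n) / (1 - s ^ (2 * L)) :=
        div_nonneg (Real.rpow_nonneg hs0.le _) hsd.le
      have hinner0 := inner_nonneg n r s hs0
      rw [Real.norm_eq_abs, abs_of_nonneg (mul_nonneg hratio0 hinner0)]
      have hratio : s ^ (2 * L - n) / (1 - s ^ (2 * L)) ≤ D := by
        rw [hD]
        apply div_le_div₀ (Real.rpow_nonneg hb0.le _)
          (Real.rpow_le_rpow hs0.le hsb hexp) hDden
        have := Real.rpow_le_rpow hs0.le hsb h2L.le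
        linarith
      have hinner : (∫ θ in (0 : ℝ)..alphaAngle r s,
          (2 * Real.cos θ - 2 * Real.cos (alphaAngle r s)) ^ (n - 2) *
            (s + 1 / s - 2 * Real.cos θ)) ≤ C := by
        calc _ ≤ 4 ^ (n - 2) * (3 + 1 / s) * Real.pi := inner_le n r s hs0 hs1.le
          _ ≤ C := by
              rw [hC]; gcongr
              exact hs.1.le
      calc s ^ (2 * L - n) / (1 - s ^ (2 * L)) *
            (∫ θ in (0 : ℝ)..alphaAngle r s,
              (2 * Real.cos θ - 2 * Real.cos (alphaAngle r s)) ^ (n - 2) *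
                (s + 1 / s - 2 * Real.cos θ))
          ≤ D * C := mul_le_mul hratio hinner hinner0 hD0
        _ = C * D := mul_comm _ _
    have hnorm := intervalIntegral.norm_integral_le_of_norm_le_const hbound
    have hba1 : |b - a| ≤ 1 := by
      rw [abs_of_nonneg (by linarith)]; linarith
    calc (∫ s in a..b,
          s ^ (2 * L - n) / (1 - s ^ (2 * L)) *
            ∫ θ in (0 : ℝ)..alphaAngle r s,
              (2 * Real.cos θ - 2 * Real.cos (alphaAngle r s)) ^ (n - 2) *
                (s + 1 / s - 2 * Real.cos θ))
        ≤ ‖∫ s in a..b,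
          s ^ (2 * L - n) / (1 - s ^ (2 * L)) *
            ∫ θ in (0 : ℝ)..alphaAngle r s,
              (2 * Real.cos θ - 2 * Real.cos (alphaAngle r s)) ^ (n - 2) *
                (s + 1 / s - 2 * Real.cos θ)‖ := le_abs_self _
      _ ≤ C * D * |b - a| := hnorm
      _ ≤ C * D := by
          nlinarith [mul_nonneg hCpos.le hD0, abs_nonneg (b - a)]
end
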